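/- arXiv:math/0605719 — 3 statements merged into one kernel-verified Lean document; each statement's English description precedes it below -/
import Mathlib

section
/- Let s ∈ 𝒜^ℕ be an infinite word such that the limit h(s) := lim_{n→∞} (1/n)·ln(1/p(s^(n))) exists and is positive. Then X_n(s)/ln n converges almost surely to 1/h(s) as n → ∞. -/
open MeasureTheory Filter Finset

noncomputable section

/- The four-letter alphabet `{A, C, G, T}` is encoded as `Fin 4`
(with `0 = A`, `1 = C`, `2 = G`, `3 = T`). -/

/-- `Tfun U s r ω` is `T_r(s)(ω)`: `T_0(s) = 0` and
`T_r(s) = T_{r-1}(s) + Z_r(s)` where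
`Z_r(s) = min {n ≥ 1 : U_{n+T_{r-1}(s)} U_{n+T_{r-1}(s)-1} ⋯ U_{n+T_{r-1}(s)-r+1} = s_1 ⋯ s_r}`. -/
def Tfun {Ω : Type*} (U : ℕ → Ω → Fin 4) (s : ℕ → Fin 4) : ℕ → Ω → ℕ
  | 0 => fun _ => 0
  | r + 1 => fun ω =>
      Tfun U s r ω +
        sInf {n : ℕ | 1 ≤ n ∧ ∀ j < r + 1, U (n + Tfun U s r ω - j) ω = s (j + 1)}

/-- `Xfun U s n ω` is `X_n(s)(ω) = max {k ≥ 0 : T_k(s) ≤ n}`, the length of the branch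
associated with `s` in the CGR-tree `𝒯_n`. -/
def Xfun {Ω : Type*} (U : ℕ → Ω → Fin 4) (s : ℕ → Fin 4) (n : ℕ) (ω : Ω) : ℕ :=
  sSup {k : ℕ | Tfun U s k ω ≤ n}

/-- `pfin μ U n w` is `p(w) = P(U_1 = w_n, U_2 = w_{n-1}, …, U_n = w_1)` for a finite
word `w = w_1 … w_n` (0-indexed: `w i` is the letter `w_{i+1}`). -/
def pfin {Ω : Type*} [MeasurableSpace Ω] (μ : Measure Ω) (U : ℕ → Ω → Fin 4)
    (n : ℕ) (w : Fin n → Fin 4) : ℝ :=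
  (μ {ω | ∀ i : Fin n, U (i.1 + 1) ω = w (Fin.rev i)}).toReal

/-- `pinf μ U s n` is `p(s^(n))`, i.e. `p` of the length-`n` prefix `s_1 … s_n` of the
infinite word `s` (with letters `s 1, s 2, …`). -/
def pinf {Ω : Type*} [MeasurableSpace Ω] (μ : Measure Ω) (U : ℕ → Ω → Fin 4)
    (s : ℕ → Fin 4) (n : ℕ) : ℝ :=
  (μ {ω | ∀ i : Fin n, U (i.1 + 1) ω = s (n - i.1)}).toReal

/-- `Dfun U n ω` is the insertion depth `D_n = 1 + X_{n-1}(s)` where `s` is an infinite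
word whose first `n` letters are `U_n U_{n-1} ⋯ U_1`. -/
def Dfun {Ω : Type*} (U : ℕ → Ω → Fin 4) (n : ℕ) (ω : Ω) : ℕ :=
  1 + Xfun U (fun i => U (n + 1 - i) ω) (n - 1) ω


namespace CGR

variable {Ω : Type*} [MeasurableSpace Ω]

/-- cylinder on coordinates `a+1, …, a+m`. -/
def OCyl (U : ℕ → Ω → Fin 4) (a m : ℕ) (w : ℕ → Fin 4) : Set Ω :=
  {ω | ∀ i < m, U (a + 1 + i) ω = w i}

lemma measurableSet_OCyl {U : ℕ → Ω → Fin 4} (hU : ∀ n, Measurable (U n))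
    (a m : ℕ) (w : ℕ → Fin 4) : MeasurableSet (OCyl U a m w) := by
  have h : OCyl U a m w = ⋂ i, ⋂ _ : i < m, (U (a + 1 + i)) ⁻¹' {w i} := by
    ext ω; simp [OCyl]
  rw [h]
  exact MeasurableSet.iInter fun i => MeasurableSet.iInter fun _ =>
    (hU _) (measurableSet_singleton _)

/-- probability of the word `w 0 … w (m-1)`. -/
def qq (Q : Fin 4 → Fin 4 → ℝ) (p : Fin 4 → ℝ) : ℕ → (ℕ → Fin 4) → ℝ
  | 0, _ => 1
  | m + 1, w => p (w 0) * ∏ i ∈ Finset.range m, Q (w i) (w (i + 1))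

lemma qq_congr {Q : Fin 4 → Fin 4 → ℝ} {p : Fin 4 → ℝ} {m : ℕ} {w w' : ℕ → Fin 4}
    (h : ∀ i < m, w i = w' i) : qq Q p m w = qq Q p m w' := by
  cases m with
  | zero => rfl
  | succ m =>
      simp only [qq]
      rw [h 0 (by omega)]
      congr 1
      refine Finset.prod_congr rfl fun i hi => ?_
      simp only [Finset.mem_range] at hi
      rw [h i (by omega), h (i + 1) (by omega)]

lemma qq_pos {Q : Fin 4 → Fin 4 → ℝ} {p : Fin 4 → ℝ}
    (hQpos : ∀ u v, 0 < Q u v) (hppos : ∀ u, 0 < p u) (m : ℕ) (w : ℕ → Fin 4) :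
    0 < qq Q p m w := by
  cases m with
  | zero => norm_num [qq]
  | succ m => exact mul_pos (hppos _) (Finset.prod_pos fun i _ => hQpos _ _)

variable {μ : Measure Ω} [IsProbabilityMeasure μ] {U : ℕ → Ω → Fin 4}
  {Q : Fin 4 → Fin 4 → ℝ} {p : Fin 4 → ℝ}

/-- the law of any block of `m` consecutive letters is `qq`. -/
lemma measure_OCyl (hU : ∀ n, Measurable (U n))
    (hpinv : ∀ v, ∑ u, p u * Q u v = p v)
    (hMarkov : ∀ (n : ℕ) (w : Fin (n + 1) → Fin 4),
      (μ {ω | ∀ i : Fin (n + 1), U (i.1 + 1) ω = w i}).toReal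
        = p (w 0) * ∏ i : Fin n, Q (w i.castSucc) (w i.succ)) :
    ∀ (t m : ℕ) (w : ℕ → Fin 4), (μ (OCyl U t m w)).toReal = qq Q p m w := by
  intro t
  induction t with
  | zero =>
      intro m w
      cases m with
      | zero =>
          have h : OCyl U 0 0 w = Set.univ := by ext ω; simp [OCyl]
          simp [h, qq]
      | succ m =>
          have hset : OCyl U 0 (m + 1) w
              = {ω | ∀ i : Fin (m + 1), U (i.1 + 1) ω = (fun j : Fin (m + 1) => w j.1) i} := by
            ext ω
            constructor
            · intro h i
              have h2 := h i.1 i.2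
              rwa [show 0 + 1 + i.1 = i.1 + 1 from by omega] at h2
            · intro h i hi
              have h2 := h ⟨i, hi⟩
              rw [show 0 + 1 + i = i + 1 from by omega]
              exact h2
          rw [hset, hMarkov m]
          simp only [qq]
          congr 1
          rw [← Fin.prod_univ_eq_prod_range (fun i => Q (w i) (w (i + 1))) m]
          exact Finset.prod_congr rfl fun i _ => by simp
  | succ t ih =>
      intro m w
      cases m with
      | zero =>
          have h : OCyl U (t + 1) 0 w = Set.univ := by ext ω; simp [OCyl]
          simp [h, qq]
      | succ m =>
          set c : Fin 4 → (ℕ → Fin 4) := fun a i => if i = 0 then a else w (i - 1) with hc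
          have hset : OCyl U (t + 1) (m + 1) w = ⋃ a : Fin 4, OCyl U t (m + 2) (c a) := by
            ext ω
            constructor
            · intro h
              refine Set.mem_iUnion.2 ⟨U (t + 1) ω, fun i hi => ?_⟩
              match i with
              | 0 => simp [hc]
              | (j : ℕ) + 1 =>
                  have h2 := h j (by omega)
                  rw [show t + 1 + (j + 1) = t + 1 + 1 + j from by omega]
                  simpa [hc] using h2
            · intro h
              rcases Set.mem_iUnion.1 h with ⟨a, ha⟩
              intro i hi
              have h2 := ha (i + 1) (by omega)
              rw [show t + 1 + 1 + i = t + 1 + (i + 1) from by omega]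
              simpa [hc] using h2
          have hdisj : Pairwise (Function.onFun Disjoint fun a => OCyl U t (m + 2) (c a)) := by
            intro a b hab
            refine Set.disjoint_left.2 fun ω ha hb => hab ?_
            have h1 := ha 0 (by omega)
            have h2 := hb 0 (by omega)
            simp only [hc, if_pos rfl] at h1 h2
            rw [← h1, ← h2]
          rw [hset, measure_iUnion hdisj (fun a => measurableSet_OCyl hU _ _ _), tsum_fintype,
            ENNReal.toReal_sum (fun a _ => measure_ne_top _ _)]
          have hval : ∀ a : Fin 4, (μ (OCyl U t (m + 2) (c a))).toReal
              = (p a * Q a (w 0)) * ∏ i ∈ Finset.range m, Q (w i) (w (i + 1)) := by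
            intro a
            rw [ih (m + 2) (c a)]
            simp only [qq]
            rw [Finset.prod_range_succ' (fun i => Q (c a i) (c a (i + 1))) m]
            have e0 : Q (c a 0) (c a 1) = Q a (w 0) := by simp [hc]
            have e1 : ∀ i ∈ Finset.range m,
                Q (c a (i + 1)) (c a (i + 1 + 1)) = Q (w i) (w (i + 1)) := by
              intro i _
              simp [hc]
            rw [e0, Finset.prod_congr rfl e1]
            simp [hc]
            ring
          rw [Finset.sum_congr rfl fun a _ => hval a, ← Finset.sum_mul]
          simp only [qq]
          congr 1
          exact hpinv (w 0)


/-- patch: replace letters `t, …, t+m-1` of `w` by `b`. -/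
def patch (w : ℕ → Fin 4) (t : ℕ) {m : ℕ} (b : Fin m → Fin 4) : ℕ → Fin 4 :=
  fun i => if h : t ≤ i ∧ i < t + m then b ⟨i - t, by omega⟩ else w i

lemma patch_lt {w : ℕ → Fin 4} {t m : ℕ} (b : Fin m → Fin 4) {i : ℕ} (h : i < t) :
    patch w t b i = w i := by
  simp only [patch]
  rw [dif_neg (by omega)]

lemma patch_ge {w : ℕ → Fin 4} {t m : ℕ} (b : Fin m → Fin 4) {j : ℕ} (h : j < m) :
    patch w t b (t + j) = b ⟨j, h⟩ := by
  simp only [patch]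
  rw [dif_pos ⟨by omega, by omega⟩]
  exact congrArg b (Fin.ext (by simp))

lemma measure_decomp (μ : Measure Ω) {U : ℕ → Ω → Fin 4} (hU : ∀ n, Measurable (U n))
    (X : Set Ω) (hX : MeasurableSet X) (t m : ℕ) (w : ℕ → Fin 4) :
    μ (OCyl U 0 t w ∩ X)
      = ∑ b : Fin m → Fin 4, μ (OCyl U 0 (t + m) (patch w t b) ∩ X) := by
  have hsub : ∀ b : Fin m → Fin 4, OCyl U 0 (t + m) (patch w t b) ⊆ OCyl U 0 t w := by
    intro b ω hb i hi
    have h2 := hb i (by omega)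
    rwa [patch_lt _ hi] at h2
  have hset : OCyl U 0 t w ∩ X
      = ⋃ b ∈ (Finset.univ : Finset (Fin m → Fin 4)),
          (OCyl U 0 (t + m) (patch w t b) ∩ X) := by
    ext ω
    simp only [Set.mem_iUnion, exists_prop]
    constructor
    · rintro ⟨hω, hωX⟩
      refine ⟨fun j : Fin m => U (0 + 1 + (t + j.1)) ω, Finset.mem_univ _, ?_, hωX⟩
      intro i hi
      by_cases hit : i < t
      · rw [patch_lt _ hit]; exact hω i hit
      · have hi2 : i = t + (i - t) := by omega
        rw [hi2, patch_ge _ (show i - t < m by omega)]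
    · rintro ⟨b, -, hb, hbX⟩
      exact ⟨hsub b hb, hbX⟩
  have hdisj : Set.PairwiseDisjoint (((Finset.univ : Finset (Fin m → Fin 4)) : Set (Fin m → Fin 4)))
      (fun b => OCyl U 0 (t + m) (patch w t b) ∩ X) := by
    intro b _ b' _ hbb'
    refine Set.disjoint_left.2 fun ω hb hb' => hbb' ?_
    funext j
    have h1 := hb.1 (t + j.1) (by omega)
    have h2 := hb'.1 (t + j.1) (by omega)
    rw [patch_ge _ j.2] at h1
    rw [patch_ge _ j.2] at h2
    rw [← h1, ← h2]
  rw [hset, measure_biUnion_finset hdisj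
    (fun b _ => (measurableSet_OCyl hU _ _ _).inter hX)]


def cQ (Q : Fin 4 → Fin 4 → ℝ) : ℝ :=
  Finset.univ.inf' ⟨(0, 0), Finset.mem_univ _⟩ (fun x : Fin 4 × Fin 4 => Q x.1 x.2)

lemma cQ_le (Q : Fin 4 → Fin 4 → ℝ) (u v : Fin 4) : cQ Q ≤ Q u v :=
  Finset.inf'_le _ (Finset.mem_univ (u, v))

lemma cQ_pos (hQpos : ∀ u v, 0 < Q u v) : 0 < cQ Q :=
  (Finset.lt_inf'_iff _).2 fun x _ => hQpos x.1 x.2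

lemma cQ_lt_one (hQpos : ∀ u v, 0 < Q u v) (hQrow : ∀ u, ∑ v, Q u v = 1) : cQ Q < 1 := by
  have h1 : Q 0 0 < ∑ v, Q 0 v := by
    refine Finset.single_lt_sum (show (1 : Fin 4) ≠ 0 by decide) (Finset.mem_univ _)
      (Finset.mem_univ _) (hQpos 0 1) (fun k _ _ => (hQpos 0 k).le)
  exact lt_of_le_of_lt (cQ_le Q 0 0) (by rw [hQrow 0] at h1; exact h1)

lemma p_le_one (hppos : ∀ u, 0 < p u) (hpsum : ∑ u, p u = 1) (u : Fin 4) : p u ≤ 1 := by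
  rw [← hpsum]
  exact Finset.single_le_sum (fun v _ => (hppos v).le) (Finset.mem_univ u)

/-- `pat s r` is the reversed prefix `s_r s_{r-1} … s_1`. -/
def pat (s : ℕ → Fin 4) (r : ℕ) : ℕ → Fin 4 := fun i => s (r - i)

/-- appending the pattern to any word costs at least `cQ * qq r pat`. -/
lemma qq_patch_ge (hQpos : ∀ u v, 0 < Q u v) (hQrow : ∀ u, ∑ v, Q u v = 1)
    (hppos : ∀ u, 0 < p u) (hpsum : ∑ u, p u = 1)
    (s : ℕ → Fin 4) (a r : ℕ) (hr : 1 ≤ r) (w : ℕ → Fin 4) :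
    cQ Q * qq Q p r (pat s r) * qq Q p a w
      ≤ qq Q p (a + r) (patch w a (fun j : Fin r => pat s r j.1)) := by
  obtain ⟨r', rfl⟩ : ∃ r', r = r' + 1 := ⟨r - 1, by omega⟩
  set pf : Fin (r' + 1) → Fin 4 := fun j => pat s (r' + 1) j.1 with hpf
  have hcQ1 : cQ Q * p (pat s (r' + 1) 0) ≤ cQ Q := by
    have := cQ_pos hQpos
    nlinarith [p_le_one hppos hpsum (pat s (r' + 1) 0), hppos (pat s (r' + 1) 0)]
  cases a with
  | zero =>
      have he : qq Q p (0 + (r' + 1)) (patch w 0 pf) = qq Q p (r' + 1) (pat s (r' + 1)) := by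
        rw [Nat.zero_add]
        refine qq_congr fun i hi => ?_
        have := patch_ge (w := w) (t := 0) pf (show i < r' + 1 from hi)
        rw [show (0 : ℕ) + i = i from by omega] at this
        rw [this]
      rw [he]
      have h1 : 0 < qq Q p (r' + 1) (pat s (r' + 1)) := qq_pos hQpos hppos _ _
      have h2 : qq Q p 0 w = 1 := rfl
      rw [h2, mul_one]
      nlinarith [cQ_pos hQpos, cQ_lt_one hQpos hQrow]
  | succ a' =>
      set v : ℕ → Fin 4 := patch w (a' + 1) pf with hv
      have harith : a' + 1 + (r' + 1) = (a' + (r' + 1)) + 1 := by omega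
      rw [harith]
      have hv_lt : ∀ i < a' + 1, v i = w i := fun i hi => patch_lt pf hi
      have hvp : ∀ j (hj : j < r' + 1), v (a' + 1 + j) = pat s (r' + 1) j := by
        intro j hj
        rw [hv, patch_ge pf hj]
      have hunf : qq Q p ((a' + (r' + 1)) + 1) v
          = p (v 0) * ∏ i ∈ Finset.range (a' + (r' + 1)), Q (v i) (v (i + 1)) := rfl
      rw [hunf, Finset.prod_range_add,
        Finset.prod_range_succ' (fun j => Q (v (a' + j)) (v (a' + j + 1))) r']
      have hv0 : v 0 = w 0 := hv_lt 0 (by omega)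
      have e1 : ∀ i ∈ Finset.range a', Q (v i) (v (i + 1)) = Q (w i) (w (i + 1)) := by
        intro i hi; simp only [Finset.mem_range] at hi
        rw [hv_lt i (by omega), hv_lt (i + 1) (by omega)]
      have e2 : ∀ j ∈ Finset.range r', Q (v (a' + (j + 1))) (v (a' + (j + 1) + 1))
          = Q (pat s (r' + 1) j) (pat s (r' + 1) (j + 1)) := by
        intro j hj; simp only [Finset.mem_range] at hj
        have u1 : v (a' + (j + 1)) = pat s (r' + 1) j := by
          rw [show a' + (j + 1) = a' + 1 + j from by omega]; exact hvp j (by omega)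
        have u2 : v (a' + (j + 1) + 1) = pat s (r' + 1) (j + 1) := by
          rw [show a' + (j + 1) + 1 = a' + 1 + (j + 1) from by omega]
          exact hvp (j + 1) (by omega)
        rw [u1, u2]
      have e3 : Q (v (a' + 0)) (v (a' + 0 + 1)) = Q (w a') (pat s (r' + 1) 0) := by
        have u2 : v (a' + 0 + 1) = pat s (r' + 1) 0 := by
          rw [show a' + 0 + 1 = a' + 1 + 0 from by omega]; exact hvp 0 (by omega)
        rw [show a' + 0 = a' from rfl, hv_lt a' (by omega), u2]
      rw [hv0, Finset.prod_congr rfl e1, Finset.prod_congr rfl e2, e3]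
      set PP := ∏ j ∈ Finset.range r', Q (pat s (r' + 1) j) (pat s (r' + 1) (j + 1)) with hPP
      set PW := ∏ i ∈ Finset.range a', Q (w i) (w (i + 1)) with hPW
      have hQw : cQ Q * p (pat s (r' + 1) 0) ≤ Q (w a') (pat s (r' + 1) 0) :=
        le_trans hcQ1 (cQ_le Q _ _)
      have hPPn : (0:ℝ) ≤ PP := Finset.prod_nonneg fun j _ => (hQpos _ _).le
      have hPWn : (0:ℝ) ≤ p (w 0) * PW :=
        mul_nonneg (hppos _).le (Finset.prod_nonneg fun i _ => (hQpos _ _).le)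
      have key := mul_le_mul_of_nonneg_right hQw (mul_nonneg hPPn hPWn)
      calc cQ Q * qq Q p (r' + 1) (pat s (r' + 1)) * qq Q p (a' + 1) w
          = (cQ Q * p (pat s (r' + 1) 0)) * (PP * (p (w 0) * PW)) := by
            simp only [qq, hPP, hPW]; ring
        _ ≤ Q (w a') (pat s (r' + 1) 0) * (PP * (p (w 0) * PW)) := key
        _ = p (w 0) * (PW * (PP * Q (w a') (pat s (r' + 1) 0))) := by ring


/-- no occurrence of the reversed prefix of length `r` in any of the `L` blocks
`[a + l r + 1, a + (l+1) r]`. -/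
def NoOccE (U : ℕ → Ω → Fin 4) (s : ℕ → Fin 4) (r a L : ℕ) : Set Ω :=
  {ω | ∀ l < L, ω ∉ OCyl U (a + l * r) r (pat s r)}

lemma measurableSet_NoOccE {U : ℕ → Ω → Fin 4} (hU : ∀ n, Measurable (U n))
    (s : ℕ → Fin 4) (r a L : ℕ) : MeasurableSet (NoOccE U s r a L) := by
  have h : NoOccE U s r a L = ⋂ l, ⋂ _ : l < L, (OCyl U (a + l * r) r (pat s r))ᶜ := by
    ext ω; simp [NoOccE]
  rw [h]
  exact MeasurableSet.iInter fun l => MeasurableSet.iInter fun _ =>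
    (measurableSet_OCyl hU _ _ _).compl

lemma BL (hU : ∀ n, Measurable (U n))
    (hQpos : ∀ u v, 0 < Q u v) (hQrow : ∀ u, ∑ v, Q u v = 1)
    (hppos : ∀ u, 0 < p u) (hpsum : ∑ u, p u = 1)
    (hpinv : ∀ v, ∑ u, p u * Q u v = p v)
    (hMarkov : ∀ (n : ℕ) (w : Fin (n + 1) → Fin 4),
      (μ {ω | ∀ i : Fin (n + 1), U (i.1 + 1) ω = w i}).toReal
        = p (w 0) * ∏ i : Fin n, Q (w i.castSucc) (w i.succ))
    (s : ℕ → Fin 4) {r : ℕ} (hr : 1 ≤ r) :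
    ∀ (L a : ℕ) (w : ℕ → Fin 4),
      (μ (OCyl U 0 a w ∩ NoOccE U s r a L)).toReal
        ≤ (1 - cQ Q * qq Q p r (pat s r)) ^ L * (μ (OCyl U 0 a w)).toReal := by
  have hmO := measure_OCyl (μ := μ) hU hpinv hMarkov
  set δ := cQ Q * qq Q p r (pat s r) with hδdef
  have hδpos : 0 < δ := mul_pos (cQ_pos hQpos) (qq_pos hQpos hppos _ _)
  have hδle : δ ≤ 1 := by
    have h1 : qq Q p r (pat s r) ≤ 1 := by
      rw [← hmO 0 r (pat s r)]
      have h2 := ENNReal.toReal_mono (show (1:ENNReal) ≠ ⊤ by norm_num)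
        (prob_le_one (μ := μ) (s := OCyl U 0 r (pat s r)))
      simpa using h2
    nlinarith [cQ_pos hQpos, cQ_lt_one hQpos hQrow, qq_pos hQpos hppos r (pat s r)]
  intro L
  induction L with
  | zero =>
      intro a w
      have h : NoOccE U s r a 0 = Set.univ := by ext ω; simp [NoOccE]
      simp [h]
  | succ L ih =>
      intro a w
      set pf : Fin r → Fin 4 := fun j => pat s r j.1 with hpf
      -- splitting of the no-occurrence event
      have hsplit : NoOccE U s r a (L + 1)
          = (OCyl U a r (pat s r))ᶜ ∩ NoOccE U s r (a + r) L := by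
        ext ω
        constructor
        · intro h
          refine ⟨by simpa using h 0 (by omega), fun l hl => ?_⟩
          have h2 := h (l + 1) (by omega)
          rwa [show a + (l + 1) * r = a + r + l * r from by ring] at h2
        · rintro ⟨h0, hrest⟩ l hl
          match l with
          | 0 => simpa using h0
          | (l' : ℕ) + 1 =>
              have h2 := hrest l' (by omega)
              rwa [show a + r + l' * r = a + (l' + 1) * r from by ring] at h2
      have hXmeas : MeasurableSet ((OCyl U a r (pat s r))ᶜ ∩ NoOccE U s r (a + r) L) :=
        (measurableSet_OCyl hU _ _ _).compl.inter (measurableSet_NoOccE hU _ _ _ _)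
      have hdec := measure_decomp μ hU _ hXmeas a r w
      -- terms of the decomposition
      have hterm : ∀ b : Fin r → Fin 4,
          (μ (OCyl U 0 (a + r) (patch w a b)
            ∩ ((OCyl U a r (pat s r))ᶜ ∩ NoOccE U s r (a + r) L))).toReal
          ≤ if b = pf then 0
            else (1 - δ) ^ L * (μ (OCyl U 0 (a + r) (patch w a b))).toReal := by
        intro b
        by_cases hb : b = pf
        · rw [if_pos hb]
          have hempty : OCyl U 0 (a + r) (patch w a b)
              ∩ ((OCyl U a r (pat s r))ᶜ ∩ NoOccE U s r (a + r) L) = ∅ := by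
            rw [Set.eq_empty_iff_forall_notMem]
            rintro ω ⟨hcyl, hfail, -⟩
            refine hfail fun i hi => ?_
            have h2 := hcyl (a + i) (by omega)
            rw [patch_ge b hi] at h2
            rw [show a + 1 + i = 0 + 1 + (a + i) from by omega, h2, hb]
          rw [hempty]
          simp
        · rw [if_neg hb]
          have hsub2 : OCyl U 0 (a + r) (patch w a b) ⊆ (OCyl U a r (pat s r))ᶜ := by
            intro ω hcyl hmatch
            refine hb (funext fun j => ?_)
            have h2 := hcyl (a + j.1) (by omega)
            rw [patch_ge b j.2] at h2
            have h3 := hmatch j.1 j.2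
            rw [show a + 1 + j.1 = 0 + 1 + (a + j.1) from by omega] at h3
            exact h2.symm.trans h3
          have heq : OCyl U 0 (a + r) (patch w a b)
              ∩ ((OCyl U a r (pat s r))ᶜ ∩ NoOccE U s r (a + r) L)
              = OCyl U 0 (a + r) (patch w a b) ∩ NoOccE U s r (a + r) L := by
            ext ω
            exact ⟨fun ⟨h1, _, h3⟩ => ⟨h1, h3⟩, fun ⟨h1, h3⟩ => ⟨h1, hsub2 h1, h3⟩⟩
          rw [heq]
          exact ih (a + r) (patch w a b)
      -- sum of cylinder masses
      have hsum : ∑ b : Fin r → Fin 4, (μ (OCyl U 0 (a + r) (patch w a b))).toReal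
          = (μ (OCyl U 0 a w)).toReal := by
        have h := measure_decomp μ hU Set.univ MeasurableSet.univ a r w
        simp only [Set.inter_univ] at h
        rw [h, ENNReal.toReal_sum (fun b _ => measure_ne_top _ _)]
      -- mass of the pattern extension
      have hpat_ge : δ * (μ (OCyl U 0 a w)).toReal
          ≤ (μ (OCyl U 0 (a + r) (patch w a pf))).toReal := by
        rw [hmO 0 a w, hmO 0 (a + r) (patch w a pf)]
        exact qq_patch_ge hQpos hQrow hppos hpsum s a r hr w
      set Mf : (Fin r → Fin 4) → ℝ
        := fun b => (μ (OCyl U 0 (a + r) (patch w a b))).toReal with hMf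
      set tot := (μ (OCyl U 0 a w)).toReal with htot
      have herase : ∑ b ∈ Finset.univ.erase pf, Mf b = tot - Mf pf := by
        have h2 := Finset.add_sum_erase Finset.univ Mf (Finset.mem_univ pf)
        rw [hsum] at h2
        linarith
      have hδL : (0:ℝ) ≤ (1 - δ) ^ L := pow_nonneg (by linarith) L
      rw [hsplit, hdec, ENNReal.toReal_sum (fun b _ => measure_ne_top _ _)]
      calc ∑ b : Fin r → Fin 4, (μ (OCyl U 0 (a + r) (patch w a b)
              ∩ ((OCyl U a r (pat s r))ᶜ ∩ NoOccE U s r (a + r) L))).toReal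
          ≤ ∑ b : Fin r → Fin 4, (if b = pf then 0 else (1 - δ) ^ L * Mf b) :=
            Finset.sum_le_sum fun b _ => hterm b
        _ = ∑ b ∈ Finset.univ.erase pf, (1 - δ) ^ L * Mf b := by
            rw [← Finset.add_sum_erase _ _ (Finset.mem_univ pf), if_pos rfl, zero_add]
            exact Finset.sum_congr rfl fun b hb => if_neg (Finset.ne_of_mem_erase hb)
        _ = (1 - δ) ^ L * (tot - Mf pf) := by rw [← Finset.mul_sum, herase]
        _ ≤ (1 - δ) ^ L * ((1 - δ) * tot) := by
            have h1 : tot - Mf pf ≤ (1 - δ) * tot := by nlinarith [hpat_ge]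
            exact mul_le_mul_of_nonneg_left h1 hδL
        _ = (1 - δ) ^ (L + 1) * tot := by ring


lemma noOcc_bound (hU : ∀ n, Measurable (U n))
    (hQpos : ∀ u v, 0 < Q u v) (hQrow : ∀ u, ∑ v, Q u v = 1)
    (hppos : ∀ u, 0 < p u) (hpsum : ∑ u, p u = 1)
    (hpinv : ∀ v, ∑ u, p u * Q u v = p v)
    (hMarkov : ∀ (n : ℕ) (w : Fin (n + 1) → Fin 4),
      (μ {ω | ∀ i : Fin (n + 1), U (i.1 + 1) ω = w i}).toReal
        = p (w 0) * ∏ i : Fin n, Q (w i.castSucc) (w i.succ))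
    (s : ℕ → Fin 4) {r : ℕ} (hr : 1 ≤ r) (a L : ℕ) :
    (μ (NoOccE U s r a L)).toReal ≤ (1 - cQ Q * qq Q p r (pat s r)) ^ L := by
  have hdec := measure_decomp μ hU (NoOccE U s r a L) (measurableSet_NoOccE hU s r a L)
    0 a (fun _ => 0)
  have huniv : OCyl U 0 0 (fun _ => 0) = Set.univ := by ext ω; simp [OCyl]
  rw [huniv, Set.univ_inter] at hdec
  have hzero : ∀ b : Fin a → Fin 4,
      (μ (OCyl U 0 (0 + a) (patch (fun _ => 0) 0 b) ∩ NoOccE U s r a L)).toReal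
      ≤ (1 - cQ Q * qq Q p r (pat s r)) ^ L
        * (μ (OCyl U 0 (0 + a) (patch (fun _ => 0) 0 b))).toReal := by
    intro b
    have h := BL hU hQpos hQrow hppos hpsum hpinv hMarkov s hr L a (patch (fun _ => 0) 0 b)
    rw [show (0 : ℕ) + a = a from by omega]
    exact h
  have hsum : ∑ b : Fin a → Fin 4,
      (μ (OCyl U 0 (0 + a) (patch (fun _ => 0) 0 b))).toReal = 1 := by
    have h := measure_decomp μ hU Set.univ MeasurableSet.univ 0 a (fun _ => 0)
    simp only [Set.inter_univ] at h
    rw [huniv, measure_univ] at h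
    rw [← ENNReal.toReal_sum (fun b _ => measure_ne_top _ _), ← h]
    simp
  rw [hdec, ENNReal.toReal_sum (fun b _ => measure_ne_top _ _)]
  calc ∑ b : Fin a → Fin 4,
        (μ (OCyl U 0 (0 + a) (patch (fun _ => 0) 0 b) ∩ NoOccE U s r a L)).toReal
      ≤ ∑ b : Fin a → Fin 4, (1 - cQ Q * qq Q p r (pat s r)) ^ L
          * (μ (OCyl U 0 (0 + a) (patch (fun _ => 0) 0 b))).toReal :=
        Finset.sum_le_sum fun b _ => hzero b
    _ = (1 - cQ Q * qq Q p r (pat s r)) ^ L * ∑ b : Fin a → Fin 4,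
          (μ (OCyl U 0 (0 + a) (patch (fun _ => 0) 0 b))).toReal := by
        rw [Finset.mul_sum]
    _ = (1 - cQ Q * qq Q p r (pat s r)) ^ L := by rw [hsum, mul_one]

/-- the good set: every reversed prefix occurs beyond every time. -/
def goodSet (U : ℕ → Ω → Fin 4) (s : ℕ → Fin 4) : Set Ω :=
  {ω | ∀ r, 1 ≤ r → ∀ M : ℕ, ∃ e, M < e ∧ r ≤ e ∧ ∀ j < r, U (e - j) ω = s (j + 1)}

lemma good_ae (hU : ∀ n, Measurable (U n))
    (hQpos : ∀ u v, 0 < Q u v) (hQrow : ∀ u, ∑ v, Q u v = 1)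
    (hppos : ∀ u, 0 < p u) (hpsum : ∑ u, p u = 1)
    (hpinv : ∀ v, ∑ u, p u * Q u v = p v)
    (hMarkov : ∀ (n : ℕ) (w : Fin (n + 1) → Fin 4),
      (μ {ω | ∀ i : Fin (n + 1), U (i.1 + 1) ω = w i}).toReal
        = p (w 0) * ∏ i : Fin n, Q (w i.castSucc) (w i.succ))
    (s : ℕ → Fin 4) : ∀ᵐ ω ∂μ, ω ∈ goodSet U s := by
  have hBad : ∀ r M : ℕ, 1 ≤ r →
      μ {ω | ∀ e, M < e → r ≤ e → ¬ ∀ j < r, U (e - j) ω = s (j + 1)} = 0 := by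
    intro r M hr
    set δ := cQ Q * qq Q p r (pat s r) with hδ
    have hδpos : 0 < δ := mul_pos (cQ_pos hQpos) (qq_pos hQpos hppos _ _)
    have hδle : δ ≤ 1 := by
      have h1 : qq Q p r (pat s r) ≤ 1 := by
        rw [← measure_OCyl (μ := μ) hU hpinv hMarkov 0 r (pat s r)]
        have h2 := ENNReal.toReal_mono (show (1:ENNReal) ≠ ⊤ by norm_num)
          (prob_le_one (μ := μ) (s := OCyl U 0 r (pat s r)))
        simpa using h2
      nlinarith [cQ_pos hQpos, cQ_lt_one hQpos hQrow, qq_pos hQpos hppos r (pat s r)]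
    have hsub : ∀ L : ℕ, {ω | ∀ e, M < e → r ≤ e → ¬ ∀ j < r, U (e - j) ω = s (j + 1)}
        ⊆ NoOccE U s r M L := by
      intro L ω hω l hl hmem
      refine hω (M + l * r + r) (by omega) (by omega) fun j hj => ?_
      have h2 := hmem (r - 1 - j) (by omega)
      rw [show M + l * r + 1 + (r - 1 - j) = M + l * r + r - j from by omega] at h2
      rw [show pat s r (r - 1 - j) = s (j + 1) from by
        simp only [pat]; congr 1; omega] at h2
      exact h2
    have hbound : ∀ L : ℕ,
        μ {ω | ∀ e, M < e → r ≤ e → ¬ ∀ j < r, U (e - j) ω = s (j + 1)}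
          ≤ ENNReal.ofReal ((1 - δ) ^ L) := by
      intro L
      refine le_trans (measure_mono (hsub L)) ?_
      rw [← ENNReal.ofReal_toReal (measure_ne_top μ (NoOccE U s r M L))]
      exact ENNReal.ofReal_le_ofReal
        (noOcc_bound hU hQpos hQrow hppos hpsum hpinv hMarkov s hr M L)
    have hlim : Tendsto (fun L : ℕ => ENNReal.ofReal ((1 - δ) ^ L)) atTop (nhds 0) := by
      have h1 : Tendsto (fun L : ℕ => (1 - δ) ^ L) atTop (nhds 0) :=
        tendsto_pow_atTop_nhds_zero_of_lt_one (by linarith) (by linarith)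
      have h2 := (ENNReal.continuous_ofReal.tendsto 0).comp h1
      simpa [Function.comp_def] using h2
    have hle := ge_of_tendsto' hlim hbound
    simpa using hle
  rw [ae_iff]
  have hsub2 : {ω | ¬ ω ∈ goodSet U s}
      ⊆ ⋃ r : ℕ, ⋃ M : ℕ,
        {ω | ∀ e, M < e → (r + 1) ≤ e → ¬ ∀ j < r + 1, U (e - j) ω = s (j + 1)} := by
    intro ω hω
    simp only [goodSet, Set.mem_setOf_eq, not_forall] at hω
    obtain ⟨r, hr1, M, hM⟩ := hω
    push_neg at hM
    refine Set.mem_iUnion.2 ⟨r - 1, Set.mem_iUnion.2 ⟨M, fun e he1 he2 hocc => ?_⟩⟩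
    rw [show r - 1 + 1 = r from by omega] at he2 hocc
    obtain ⟨j, hj, hne⟩ := hM e he1 he2
    exact hne (hocc j hj)
  exact measure_mono_null hsub2 (measure_iUnion_null fun r => measure_iUnion_null fun M =>
    hBad (r + 1) M (by omega))


section Pathwise

variable {U : ℕ → Ω → Fin 4} {s : ℕ → Fin 4} {ω : Ω}

lemma Tfun_succ (U : ℕ → Ω → Fin 4) (s : ℕ → Fin 4) (r : ℕ) (ω : Ω) :
    Tfun U s (r + 1) ω = Tfun U s r ω +
      sInf {n : ℕ | 1 ≤ n ∧ ∀ j < r + 1, U (n + Tfun U s r ω - j) ω = s (j + 1)} := rfl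

lemma Tfun_mono (U : ℕ → Ω → Fin 4) (s : ℕ → Fin 4) (ω : Ω) :
    Monotone (fun r => Tfun U s r ω) :=
  monotone_nat_of_le_succ fun r => by rw [Tfun_succ]; exact Nat.le_add_right _ _

lemma good_T (hg : ω ∈ goodSet U s) :
    ∀ r, r ≤ Tfun U s r ω ∧ (1 ≤ r → ∀ j < r, U (Tfun U s r ω - j) ω = s (j + 1)) := by
  intro r
  induction r with
  | zero => exact ⟨Nat.zero_le _, by omega⟩
  | succ r ih =>
      obtain ⟨e, he1, he2, he3⟩ := hg (r + 1) (by omega) (Tfun U s r ω)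
      set S := {n : ℕ | 1 ≤ n ∧ ∀ j < r + 1, U (n + Tfun U s r ω - j) ω = s (j + 1)} with hS
      have hmemS : (e - Tfun U s r ω) ∈ S := by
        refine ⟨by omega, fun j hj => ?_⟩
        rw [show e - Tfun U s r ω + Tfun U s r ω - j = e - j from by omega]
        exact he3 j hj
      have hmem := Nat.sInf_mem (Set.nonempty_of_mem hmemS)
      constructor
      · rw [Tfun_succ, ← hS]
        have := hmem.1
        omega
      · intro _ j hj
        rw [Tfun_succ, ← hS,
          show Tfun U s r ω + sInf S - j = sInf S + Tfun U s r ω - j from by omega]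
        exact hmem.2 j hj

lemma X_le_iff (hg : ω ∈ goodSet U s) (n k : ℕ) :
    k ≤ Xfun U s n ω ↔ Tfun U s k ω ≤ n := by
  have hbdd : BddAbove {k : ℕ | Tfun U s k ω ≤ n} :=
    ⟨n, fun k' hk' => le_trans (good_T hg k').1 hk'⟩
  have hne : {k : ℕ | Tfun U s k ω ≤ n}.Nonempty := ⟨0, Nat.zero_le n⟩
  constructor
  · intro h
    exact le_trans (Tfun_mono U s ω h) (Nat.sSup_mem hne hbdd)
  · intro h
    exact le_csSup hbdd h

lemma X_mono (hg : ω ∈ goodSet U s) {n n' : ℕ} (h : n ≤ n') :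
    Xfun U s n ω ≤ Xfun U s n' ω := by
  rw [X_le_iff hg]
  exact le_trans ((X_le_iff hg n _).1 le_rfl) h

lemma T_le_of_occs {k : ℕ} (hk : 1 ≤ k) (E : ℕ → ℕ) (hE0 : 1 ≤ E 0)
    (hEm : ∀ i, i + 1 < k → E i < E (i + 1))
    (hocc : ∀ i < k, ∀ j < k, U (E i - j) ω = s (j + 1)) :
    Tfun U s k ω ≤ E (k - 1) := by
  have key : ∀ r, 1 ≤ r → r ≤ k → Tfun U s r ω ≤ E (r - 1) := by
    intro r
    induction r with
    | zero => omega
    | succ r ih =>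
        intro _ hrk
        have hTr : Tfun U s r ω < E r := by
          rcases Nat.eq_zero_or_pos r with hr0 | hr0
          · subst hr0
            show Tfun U s 0 ω < E 0
            rw [show Tfun U s 0 ω = 0 from rfl]
            omega
          · have h1 := ih hr0 (by omega)
            have h2 := hEm (r - 1) (by omega)
            rw [show r - 1 + 1 = r from by omega] at h2
            omega
        have hmemS : (E r - Tfun U s r ω)
            ∈ {n : ℕ | 1 ≤ n ∧ ∀ j < r + 1, U (n + Tfun U s r ω - j) ω = s (j + 1)} := by
          refine ⟨by omega, fun j hj => ?_⟩
          rw [show E r - Tfun U s r ω + Tfun U s r ω - j = E r - j from by omega]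
          exact hocc r (by omega) j (by omega)
        calc Tfun U s (r + 1) ω
            ≤ Tfun U s r ω + (E r - Tfun U s r ω) := by
              rw [Tfun_succ]
              exact Nat.add_le_add_left (Nat.sInf_le hmemS) _
          _ = E r := by omega
          _ = E (r + 1 - 1) := by norm_num
  exact key k hk le_rfl

lemma upper_incl (hg : ω ∈ goodSet U s) {k n : ℕ} (hk : 1 ≤ k)
    (hX : k ≤ Xfun U s n ω) :
    ∃ e, k ≤ e ∧ e ≤ n ∧ ω ∈ OCyl U (e - k) k (pat s k) := by
  have hT : Tfun U s k ω ≤ n := (X_le_iff hg n k).1 hX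
  obtain ⟨hTk, hocc⟩ := good_T hg k
  refine ⟨Tfun U s k ω, hTk, hT, fun i hi => ?_⟩
  have h2 := hocc hk (k - 1 - i) (by omega)
  rw [show Tfun U s k ω - (k - 1 - i) = Tfun U s k ω - k + 1 + i from by omega] at h2
  rw [show k - 1 - i + 1 = k - i from by omega] at h2
  exact h2

lemma lower_incl (hg : ω ∈ goodSet U s) {k n G : ℕ} (hk : 1 ≤ k) (hG : k * k * G ≤ n)
    (h : ∀ g < k, ∃ l < G, ω ∈ OCyl U (g * G * k + l * k) k (pat s k)) :
    k ≤ Xfun U s n ω := by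
  choose l hlG hcy using h
  rw [X_le_iff hg]
  set E : ℕ → ℕ := fun g => if hgk : g < k then g * G * k + l g hgk * k + k else 0 with hE
  have hEval : ∀ g (hgk : g < k), E g = g * G * k + l g hgk * k + k := by
    intro g hgk; rw [hE]; simp only [dif_pos hgk]
  have hocc : ∀ i < k, ∀ j < k, U (E i - j) ω = s (j + 1) := by
    intro i hik j hjk
    have hmem := hcy i hik (k - 1 - j) (by omega)
    rw [show i * G * k + l i hik * k + 1 + (k - 1 - j)
        = i * G * k + l i hik * k + k - j from by omega] at hmem
    rw [show pat s k (k - 1 - j) = s (j + 1) from by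
      simp only [pat]; congr 1; omega] at hmem
    rw [hEval i hik]
    exact hmem
  have hTle := T_le_of_occs hk E (by rw [hEval 0 (by omega)]; omega)
    (fun i hik => by
      have h1 := hEval i (by omega)
      have h2 := hEval (i + 1) hik
      have h3 : l i (by omega : i < k) * k + k ≤ G * k := by
        have := hlG i (by omega : i < k)
        calc l i (by omega : i < k) * k + k = (l i (by omega : i < k) + 1) * k := by ring
          _ ≤ G * k := Nat.mul_le_mul_right k (by omega)
      have h4 : i * G * k + G * k = (i + 1) * G * k := by ring
      omega)
    hocc
  refine le_trans hTle ?_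
  have h1 := hEval (k - 1) (by omega)
  have h3 : l (k - 1) (by omega : k - 1 < k) * k + k ≤ G * k := by
    have := hlG (k - 1) (by omega : k - 1 < k)
    calc l (k - 1) (by omega : k - 1 < k) * k + k
        = (l (k - 1) (by omega : k - 1 < k) + 1) * k := by ring
      _ ≤ G * k := Nat.mul_le_mul_right k (by omega)
  have h4 : (k - 1) * G * k + G * k = k * G * k := by
    have : k - 1 + 1 = k := by omega
    calc (k - 1) * G * k + G * k = (k - 1 + 1) * G * k := by ring
      _ = k * G * k := by rw [this]
  have h5 : k * G * k = k * k * G := by ring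
  omega

end Pathwise

lemma borelCantelli {μ : Measure Ω} {S : ℕ → Set Ω} {b : ℕ → ℝ}
    (hb0 : ∀ i, 0 ≤ b i) (hbs : Summable b)
    (hμ : ∀ i, μ (S i) ≤ ENNReal.ofReal (b i)) :
    ∀ᵐ ω ∂μ, ∀ᶠ i in atTop, ω ∉ S i := by
  rw [ae_iff]
  have hsub : ∀ J : ℕ, {ω | ¬ ∀ᶠ i in atTop, ω ∉ S i} ⊆ ⋃ i, S (i + J) := by
    intro J ω hω
    simp only [Set.mem_setOf_eq, Filter.eventually_atTop, not_exists, not_forall,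
      Classical.not_imp, not_not] at hω
    obtain ⟨i, hiJ, hi⟩ := hω J
    exact Set.mem_iUnion.2 ⟨i - J, by rw [Nat.sub_add_cancel hiJ]; exact hi⟩
  have hbound : ∀ J : ℕ, μ {ω | ¬ ∀ᶠ i in atTop, ω ∉ S i}
      ≤ ENNReal.ofReal (∑' i, b (i + J)) := by
    intro J
    calc μ {ω | ¬ ∀ᶠ i in atTop, ω ∉ S i} ≤ μ (⋃ i, S (i + J)) := measure_mono (hsub J)
      _ ≤ ∑' i, μ (S (i + J)) := measure_iUnion_le _
      _ ≤ ∑' i, ENNReal.ofReal (b (i + J)) := ENNReal.tsum_le_tsum fun i => hμ _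
      _ = ENNReal.ofReal (∑' i, b (i + J)) :=
          (ENNReal.ofReal_tsum_of_nonneg (fun i => hb0 _)
            ((summable_nat_add_iff J).2 hbs)).symm
  have hlim : Tendsto (fun J : ℕ => ENNReal.ofReal (∑' i, b (i + J))) atTop (nhds 0) := by
    have h1 := tendsto_sum_nat_add b
    have h2 := (ENNReal.continuous_ofReal.tendsto 0).comp h1
    simpa [Function.comp_def] using h2
  have h3 := ge_of_tendsto' hlim hbound
  simpa using h3

end CGR

set_option maxHeartbeats 2000000 in
/-- If `s ∈ 𝒜^ℕ` is such that `h(s) = lim_n (1/n) ln (1 / p(s^(n)))`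
exists and is positive, then `X_n(s) / ln n → 1 / h(s)` almost surely. -/
theorem branch_length_lemma
    {Ω : Type*} [MeasurableSpace Ω] (μ : Measure Ω) [IsProbabilityMeasure μ]
    (U : ℕ → Ω → Fin 4) (hU : ∀ n, Measurable (U n))
    (Q : Fin 4 → Fin 4 → ℝ) (p : Fin 4 → ℝ)
    (hQpos : ∀ u v, 0 < Q u v) (hQrow : ∀ u, ∑ v, Q u v = 1)
    (hppos : ∀ u, 0 < p u) (hpsum : ∑ u, p u = 1)
    (hpinv : ∀ v, ∑ u, p u * Q u v = p v)
    (hMarkov : ∀ (n : ℕ) (w : Fin (n + 1) → Fin 4),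
      (μ {ω | ∀ i : Fin (n + 1), U (i.1 + 1) ω = w i}).toReal
        = p (w 0) * ∏ i : Fin n, Q (w i.castSucc) (w i.succ))
    (s : ℕ → Fin 4) (hs : ℝ) (hs_pos : 0 < hs)
    (hs_lim : Tendsto (fun n : ℕ => (1 / (n : ℝ)) * Real.log (1 / pinf μ U s n))
      atTop (nhds hs)) :
    ∀ᵐ ω ∂μ, Tendsto (fun n : ℕ => ((Xfun U s n ω : ℕ) : ℝ) / Real.log n)
      atTop (nhds (1 / hs)) := by
  classical
  have hmO := CGR.measure_OCyl (μ := μ) hU hpinv hMarkov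
  set P : ℕ → ℝ := fun k => CGR.qq Q p k (CGR.pat s k) with hPdef
  have hPpos : ∀ k, 0 < P k := fun k => CGR.qq_pos hQpos hppos _ _
  have hP1 : ∀ k, P k ≤ 1 := by
    intro k
    have h1 : P k = (μ (CGR.OCyl U 0 k (CGR.pat s k))).toReal := (hmO 0 k _).symm
    rw [h1]
    have h2 := ENNReal.toReal_mono (show (1:ENNReal) ≠ ⊤ by norm_num)
      (prob_le_one (μ := μ) (s := CGR.OCyl U 0 k (CGR.pat s k)))
    simpa using h2
  have hpinfP : ∀ n, pinf μ U s n = P n := by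
    intro n
    have hset : {ω | ∀ i : Fin n, U (i.1 + 1) ω = s (n - i.1)}
        = CGR.OCyl U 0 n (CGR.pat s n) := by
      ext ω
      constructor
      · intro h i hi
        have h2 := h ⟨i, hi⟩
        rw [show 0 + 1 + i = i + 1 from by omega]
        exact h2
      · intro h i
        have h2 := h i.1 i.2
        rw [show 0 + 1 + i.1 = i.1 + 1 from by omega] at h2
        exact h2
    rw [pinf, hset, hmO 0 n (CGR.pat s n)]
  have hPlim : Tendsto (fun n : ℕ => (1 / (n : ℝ)) * Real.log (1 / P n)) atTop (nhds hs) := by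
    simp only [hpinfP] at hs_lim
    exact hs_lim
  have hPbound : ∀ ε : ℝ, 0 < ε → ∀ᶠ k : ℕ in atTop,
      Real.exp (-((hs + ε) * k)) ≤ P k ∧ P k ≤ Real.exp (-((hs - ε) * k)) := by
    intro ε hε
    have h1 : ∀ᶠ k : ℕ in atTop, |(1 / (k:ℝ)) * Real.log (1 / P k) - hs| < ε := by
      have h2 := hPlim.eventually (Metric.ball_mem_nhds hs hε)
      simpa [Real.dist_eq] using h2
    filter_upwards [h1, eventually_ge_atTop 1] with n hk hk1
    have hkpos : (0:ℝ) < n := by exact_mod_cast hk1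
    rw [one_div (P n), Real.log_inv, abs_lt] at hk
    have hup : - Real.log (P n) < (hs + ε) * n := by
      have h3 : (1/(n:ℝ)) * (- Real.log (P n)) < hs + ε := by
        have := hk.2; linarith
      calc - Real.log (P n) = ((1/(n:ℝ)) * (- Real.log (P n))) * n := by field_simp
        _ < (hs + ε) * n := mul_lt_mul_of_pos_right h3 hkpos
    have hdown : (hs - ε) * n < - Real.log (P n) := by
      have h3 : hs - ε < (1/(n:ℝ)) * (- Real.log (P n)) := by
        have := hk.1; linarith
      calc (hs - ε) * n < ((1/(n:ℝ)) * (- Real.log (P n))) * n :=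
            mul_lt_mul_of_pos_right h3 hkpos
        _ = - Real.log (P n) := by field_simp
    constructor
    · rw [← Real.exp_log (hPpos n)]
      exact Real.exp_le_exp.2 (by linarith)
    · rw [← Real.exp_log (hPpos n)]
      exact Real.exp_le_exp.2 (by linarith)
  set c := CGR.cQ Q with hc
  have hcpos : 0 < c := CGR.cQ_pos hQpos
  have hclt1 : c < 1 := CGR.cQ_lt_one hQpos hQrow
  have hGood := CGR.good_ae (μ := μ) hU hQpos hQrow hppos hpsum hpinv hMarkov s
  have hlog2 : (0:ℝ) < Real.log 2 := Real.log_pos (by norm_num)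
  have hlogn : Tendsto (fun n : ℕ => Real.log n) atTop atTop :=
    Real.tendsto_log_atTop.comp tendsto_natCast_atTop_atTop
  -- UPPER BOUND
  have hupper : ∀ ε : ℝ, 0 < ε → ε ≤ 1/2 → ∀ᵐ ω ∂μ, ω ∈ CGR.goodSet U s →
      ∀ᶠ n : ℕ in atTop, (Xfun U s n ω : ℝ) ≤ (1 + ε) * Real.log n / hs := by
    intro ε hε hε1
    set K : ℕ → ℕ := fun i => ⌈(1 + ε) * ((i:ℝ) * Real.log 2) / hs⌉₊ with hK
    set S : ℕ → Set Ω := fun i =>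
      ⋃ e ∈ Finset.Icc (K i) (2 ^ (i + 1)),
        CGR.OCyl U (e - K i) (K i) (CGR.pat s (K i)) with hSdef
    set b : ℕ → ℝ := fun i => ((2 ^ (i + 2) : ℕ) : ℝ) * P (K i) with hb
    have hb0 : ∀ i, 0 ≤ b i := fun i => mul_nonneg (by positivity) (hPpos _).le
    have hμS : ∀ i, μ (S i) ≤ ENNReal.ofReal (b i) := by
      intro i
      have hcard : (Finset.Icc (K i) (2 ^ (i + 1))).card ≤ 2 ^ (i + 2) := by
        rw [Nat.card_Icc]
        have h7 : 1 ≤ 2 ^ (i + 1) := Nat.one_le_two_pow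
        have h8 : 2 ^ (i + 2) = 2 ^ (i + 1) + 2 ^ (i + 1) := by ring
        omega
      have hofb : ENNReal.ofReal (b i)
          = ((2 ^ (i + 2) : ℕ) : ENNReal) * ENNReal.ofReal (P (K i)) := by
        rw [hb, ENNReal.ofReal_mul (by positivity), ENNReal.ofReal_natCast]
      calc μ (S i) ≤ ∑ e ∈ Finset.Icc (K i) (2 ^ (i + 1)),
            μ (CGR.OCyl U (e - K i) (K i) (CGR.pat s (K i))) :=
          measure_biUnion_finset_le _ _
        _ = ∑ e ∈ Finset.Icc (K i) (2 ^ (i + 1)), ENNReal.ofReal (P (K i)) := by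
            refine Finset.sum_congr rfl fun e _ => ?_
            rw [← ENNReal.ofReal_toReal (measure_ne_top μ _), hmO]
        _ = ((Finset.Icc (K i) (2 ^ (i + 1))).card : ENNReal) * ENNReal.ofReal (P (K i)) := by
            rw [Finset.sum_const, nsmul_eq_mul]
        _ ≤ ((2 ^ (i + 2) : ℕ) : ENNReal) * ENNReal.ofReal (P (K i)) :=
            mul_le_mul_left (Nat.cast_le.2 hcard) _
        _ = ENNReal.ofReal (b i) := hofb.symm
    have hsumb : Summable b := by
      obtain ⟨N, hN⟩ := eventually_atTop.1 (hPbound (hs * ε / 2) (by positivity))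
      set β := (1 - ε/2) * (1 + ε) with hβ
      have hβ1 : 1 < β := by rw [hβ]; nlinarith
      set rr := Real.exp ((1 - β) * Real.log 2) with hrr
      have hrr0 : 0 ≤ rr := (Real.exp_pos _).le
      have hrr1 : rr < 1 := by
        rw [hrr, Real.exp_lt_one_iff]
        nlinarith
      have hxt : Tendsto (fun i : ℕ => (1 + ε) * ((i:ℝ) * Real.log 2) / hs) atTop atTop := by
        have h2 : Tendsto (fun i : ℕ => (i:ℝ)) atTop atTop := tendsto_natCast_atTop_atTop
        have hconst : 0 < (1 + ε) * Real.log 2 / hs := by positivity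
        have h3 := h2.atTop_mul_const hconst
        refine h3.congr fun i => ?_
        ring
      have hev : ∀ᶠ i : ℕ in atTop, b i ≤ 4 * rr ^ i := by
        filter_upwards [hxt.eventually_ge_atTop (N : ℝ)] with i hi
        have hKx : (1 + ε) * ((i:ℝ) * Real.log 2) / hs ≤ (K i : ℝ) := Nat.le_ceil _
        have hKN : N ≤ K i := by
          have h4 : (N:ℝ) ≤ (K i : ℝ) := le_trans hi hKx
          exact_mod_cast h4
        have hPKi := (hN (K i) hKN).2
        have h5 : P (K i) ≤ Real.exp (-(β * ((i:ℝ) * Real.log 2))) := by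
          refine le_trans hPKi (Real.exp_le_exp.2 ?_)
          have h6 : hs - hs * ε / 2 = hs * (1 - ε/2) := by ring
          have h7 : (0:ℝ) < 1 - ε/2 := by linarith
          have h8 : hs * (1 - ε/2) * ((1 + ε) * ((i:ℝ) * Real.log 2) / hs)
              ≤ hs * (1 - ε/2) * (K i : ℝ) :=
            mul_le_mul_of_nonneg_left hKx (by positivity)
          have h9 : hs * (1 - ε/2) * ((1 + ε) * ((i:ℝ) * Real.log 2) / hs)
              = β * ((i:ℝ) * Real.log 2) := by
            rw [hβ]; field_simp
          rw [h6]
          nlinarith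
        have h10 : b i ≤ ((2 ^ (i + 2) : ℕ) : ℝ) * Real.exp (-(β * ((i:ℝ) * Real.log 2))) :=
          mul_le_mul_of_nonneg_left h5 (by positivity)
        refine le_trans h10 ?_
        have h11 : ((2 ^ (i + 2) : ℕ) : ℝ) = 4 * 2 ^ i := by
          push_cast
          ring
        have h12 : Real.exp (-(β * ((i:ℝ) * Real.log 2)))
            = Real.exp (-(β * Real.log 2)) ^ i := by
          rw [← Real.exp_nat_mul]
          congr 1
          ring
        rw [h11, h12, mul_assoc, ← mul_pow]
        have h13 : 2 * Real.exp (-(β * Real.log 2)) = rr := by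
          rw [hrr, ← Real.exp_log (show (0:ℝ) < 2 by norm_num), ← Real.exp_add]
          congr 1
          rw [Real.log_exp]
          ring
        rw [h13]
      obtain ⟨I, hI⟩ := eventually_atTop.1 hev
      have hsum4 : Summable (fun i : ℕ => 4 * rr ^ (i + I)) :=
        (summable_nat_add_iff I).2 ((summable_geometric_of_lt_one hrr0 hrr1).mul_left 4)
      rw [← summable_nat_add_iff I]
      exact Summable.of_nonneg_of_le (fun i => hb0 _) (fun i => hI (i + I) (by omega)) hsum4
    have hbc := CGR.borelCantelli hb0 hsumb hμS
    filter_upwards [hbc] with ω hω hg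
    obtain ⟨I₀, hI₀⟩ := eventually_atTop.1 hω
    set I₁ := max I₀ 1 with hI₁
    rw [Filter.eventually_atTop]
    refine ⟨max (2 ^ I₁) 2, fun n hn => ?_⟩
    have hn2 : 2 ≤ n := le_trans (le_max_right _ _) hn
    have hnI : 2 ^ I₁ ≤ n := le_trans (le_max_left _ _) hn
    set i := Nat.log 2 n with hi
    have hiI : I₁ ≤ i := (Nat.le_log_iff_pow_le (by norm_num) (by omega)).2 hnI
    have h2i : 2 ^ i ≤ n := Nat.pow_log_le_self 2 (by omega)
    have hn2i : n < 2 ^ (i + 1) := Nat.lt_pow_succ_log_self (by norm_num) n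
    have hi1 : 1 ≤ i := le_trans (le_max_right _ _) hiI
    have hK1 : 1 ≤ K i := by
      refine Nat.ceil_pos.2 ?_
      have h4 : (0:ℝ) < (i:ℝ) := by exact_mod_cast hi1
      positivity
    have hXlt : Xfun U s (2 ^ (i + 1)) ω < K i := by
      by_contra hcon
      push_neg at hcon
      obtain ⟨e1, he1, he2, he3⟩ := CGR.upper_incl hg hK1 hcon
      exact hI₀ i (le_trans (le_max_left _ _) hiI)
        (Set.mem_biUnion (Finset.mem_Icc.2 ⟨he1, he2⟩) he3)
    have hXn : Xfun U s n ω < K i := lt_of_le_of_lt (CGR.X_mono hg (le_of_lt hn2i)) hXlt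
    have hceil : (K i : ℝ) < (1 + ε) * ((i:ℝ) * Real.log 2) / hs + 1 := by
      rw [hK]
      exact Nat.ceil_lt_add_one (by positivity)
    have hXr : (Xfun U s n ω : ℝ) ≤ (K i : ℝ) - 1 := by
      have h4 : Xfun U s n ω + 1 ≤ K i := hXn
      have h5 : ((Xfun U s n ω : ℕ) : ℝ) + 1 ≤ (K i : ℝ) := by exact_mod_cast h4
      linarith
    have hlog_le : (i:ℝ) * Real.log 2 ≤ Real.log n := by
      have h4 : ((2:ℝ) ^ i) ≤ (n:ℝ) := by exact_mod_cast h2i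
      have h5 := Real.log_le_log (by positivity) h4
      rwa [Real.log_pow] at h5
    refine le_of_lt ?_
    calc (Xfun U s n ω : ℝ) ≤ (K i : ℝ) - 1 := hXr
      _ < (1 + ε) * ((i:ℝ) * Real.log 2) / hs := by linarith
      _ ≤ (1 + ε) * Real.log n / hs := by
          have h6 : (1 + ε) * ((i:ℝ) * Real.log 2) ≤ (1 + ε) * Real.log n :=
            mul_le_mul_of_nonneg_left hlog_le (by linarith)
          exact (div_le_div_iff_of_pos_right hs_pos).2 h6
  -- LOWER BOUND
  have hlower : ∀ ε : ℝ, 0 < ε → ε ≤ 1/2 → ∀ᵐ ω ∂μ, ω ∈ CGR.goodSet U s →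
      ∀ᶠ n : ℕ in atTop, (1 - ε) * Real.log n / hs - 1 ≤ (Xfun U s n ω : ℝ) := by
    intro ε hε hε1
    set k : ℕ → ℕ := fun n => ⌊(1 - ε) * Real.log n / hs⌋₊ with hkdef
    set G : ℕ → ℕ := fun n => n / (k n * k n) with hGdef
    set S : ℕ → Set Ω := fun n => ⋃ g ∈ Finset.range (k n),
      CGR.NoOccE U s (k n) (g * G n * k n) (G n) with hSdef
    set b : ℕ → ℝ := fun n => (k n : ℝ) * (1 - c * P (k n)) ^ (G n) with hb
    have hδpos : ∀ m, 0 < c * P m := fun m => mul_pos hcpos (hPpos m)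
    have hδlt1 : ∀ m, c * P m < 1 := by
      intro m
      have h4 := mul_lt_mul_of_pos_right hclt1 (hPpos m)
      rw [one_mul] at h4
      exact lt_of_lt_of_le h4 (hP1 m)
    have hb0 : ∀ n, 0 ≤ b n := fun n =>
      mul_nonneg (Nat.cast_nonneg _) (pow_nonneg (by linarith [hδlt1 (k n)]) _)
    have hμS : ∀ n, μ (S n) ≤ ENNReal.ofReal (b n) := by
      intro n
      calc μ (S n) ≤ ∑ g ∈ Finset.range (k n),
            μ (CGR.NoOccE U s (k n) (g * G n * k n) (G n)) :=
          measure_biUnion_finset_le _ _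
        _ ≤ ∑ g ∈ Finset.range (k n), ENNReal.ofReal ((1 - c * P (k n)) ^ (G n)) := by
            refine Finset.sum_le_sum fun g hg => ?_
            have hk1 : 1 ≤ k n := by
              have := Finset.mem_range.1 hg; omega
            rw [← ENNReal.ofReal_toReal (measure_ne_top μ _)]
            exact ENNReal.ofReal_le_ofReal
              (CGR.noOcc_bound hU hQpos hQrow hppos hpsum hpinv hMarkov s hk1 _ _)
        _ = ((k n : ℕ) : ENNReal) * ENNReal.ofReal ((1 - c * P (k n)) ^ (G n)) := by
            rw [Finset.sum_const, Finset.card_range, nsmul_eq_mul]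
        _ = ENNReal.ofReal (b n) := by
            rw [hb, ENNReal.ofReal_mul (Nat.cast_nonneg _), ENNReal.ofReal_natCast]
    have hsumb : Summable b := by
      obtain ⟨N, hN⟩ := eventually_atTop.1 (hPbound (hs * ε / 2) (by positivity))
      have hxt : Tendsto (fun n : ℕ => (1 - ε) * Real.log n / hs) atTop atTop := by
        have h3 := hlogn.atTop_mul_const (show (0:ℝ) < (1 - ε) / hs from
          div_pos (by linarith) hs_pos)
        refine h3.congr fun n => ?_
        ring
      have hktend : Tendsto k atTop atTop := tendsto_nat_floor_atTop.comp hxt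
      have hT3 : Tendsto (fun y : ℝ => Real.exp ((ε/2) * y) / y ^ 3) atTop atTop := by
        have h4 : Tendsto (fun y : ℝ => (ε/2) * y) atTop atTop :=
          Tendsto.const_mul_atTop (half_pos hε) tendsto_id
        have h5 := (Real.tendsto_exp_div_pow_atTop 3).comp h4
        have h6 := h5.const_mul_atTop (show (0:ℝ) < (ε/2)^3 by positivity)
        refine h6.congr' ?_
        filter_upwards [eventually_gt_atTop (0:ℝ)] with y hy
        have hy0 : y ≠ 0 := ne_of_gt hy
        have hε0 : (ε:ℝ)/2 ≠ 0 := ne_of_gt (half_pos hε)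
        show (ε/2)^3 * (Real.exp ((ε/2) * y) / ((ε/2) * y) ^ 3) = Real.exp ((ε/2) * y) / y ^ 3
        field_simp
      set MM := (3 / c + 1) / hs ^ 2 with hMM
      have hyEv : ∀ᶠ y : ℝ in atTop,
          3 * y ≤ c * (hs ^ 2 * Real.exp ((ε/2) * y) / y ^ 2 - 1) := by
        filter_upwards [hT3.eventually_ge_atTop MM, eventually_ge_atTop (1:ℝ)] with y hy1 hy2
        have hypos : (0:ℝ) < y := lt_of_lt_of_le one_pos hy2
        have hy0 : y ≠ 0 := ne_of_gt hypos
        have h7 : hs ^ 2 * Real.exp ((ε/2) * y) / y ^ 2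
            = hs ^ 2 * y * (Real.exp ((ε/2) * y) / y ^ 3) := by
          field_simp
        have h8 : hs ^ 2 * y * MM ≤ hs ^ 2 * y * (Real.exp ((ε/2) * y) / y ^ 3) :=
          mul_le_mul_of_nonneg_left hy1 (by positivity)
        have h9 : hs ^ 2 * y * MM = (3 / c + 1) * y := by
          rw [hMM]; field_simp
        have h10 : (3 / c + 1) * y = 3 * y / c + y := by ring
        have h11 : c * (3 * y / c + y - 1) = 3 * y + c * y - c := by
          field_simp
        have h12 : 3 * y + c * y - c ≥ 3 * y := by nlinarith
        have h13 : c * (hs ^ 2 * Real.exp ((ε/2) * y) / y ^ 2 - 1)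
            ≥ c * (3 * y / c + y - 1) := by
          have h14 : hs ^ 2 * Real.exp ((ε/2) * y) / y ^ 2 ≥ 3 * y / c + y := by
            rw [h7]
            calc 3 * y / c + y = (3 / c + 1) * y := by ring
              _ = hs ^ 2 * y * MM := h9.symm
              _ ≤ hs ^ 2 * y * (Real.exp ((ε/2) * y) / y ^ 3) := h8
          nlinarith
        linarith [h13, h11.ge, h11.le, h12]
      have hev : ∀ᶠ n : ℕ in atTop, b n ≤ (1/hs) * (1 / (n:ℝ) ^ 2) := by
        filter_upwards [hktend.eventually_ge_atTop N, hktend.eventually_ge_atTop 1,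
          hlogn.eventually hyEv, hlogn.eventually_ge_atTop 1,
          eventually_ge_atTop 1] with n hkN hk1 hyE hy1 hn1
        set y := Real.log n with hy
        have hnpos : (0:ℝ) < (n:ℝ) := by exact_mod_cast hn1
        have hypos : (0:ℝ) < y := lt_of_lt_of_le one_pos hy1
        have hkrpos : (0:ℝ) < (k n : ℝ) := by exact_mod_cast hk1
        set kr := ((k n : ℕ) : ℝ) with hkr
        set dd := c * P (k n) with hdd
        have hddpos : 0 < dd := hδpos (k n)
        have hddlt1 : dd < 1 := hδlt1 (k n)
        -- kr ≤ (1-ε) y / hs and kr ≤ y / hs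
        have hfl : kr ≤ (1 - ε) * y / hs := by
          rw [hkr, hkdef]
          exact Nat.floor_le (by
            apply div_nonneg _ hs_pos.le
            have : (0:ℝ) ≤ y := hypos.le
            nlinarith)
        have hkry : kr ≤ y / hs := by
          have h15 : (1 - ε) * y / hs ≤ y / hs := by
            apply div_le_div_of_nonneg_right _ hs_pos.le
            nlinarith
          linarith
        -- lower bound for dd
        have hPk := (hN (k n) hkN).1
        have hdd_ge : c * Real.exp (-((1 - ε/2) * y)) ≤ dd := by
          rw [hdd]
          refine mul_le_mul_of_nonneg_left ?_ hcpos.le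
          refine le_trans (Real.exp_le_exp.2 ?_) hPk
          have h16 : hs + hs * ε / 2 = hs * (1 + ε/2) := by ring
          have h17 : hs * (1 + ε/2) * kr ≤ hs * (1 + ε/2) * ((1 - ε) * y / hs) :=
            mul_le_mul_of_nonneg_left hfl (mul_nonneg hs_pos.le (by linarith))
          have h18 : hs * (1 + ε/2) * ((1 - ε) * y / hs) = (1 + ε/2) * (1 - ε) * y := by
            field_simp
          have h19 : (1 + ε/2) * (1 - ε) * y ≤ (1 - ε/2) * y := by nlinarith [mul_pos hypos (mul_pos hε hε)]
          rw [h16]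
          rw [neg_le_neg_iff]
          calc hs * (1 + ε/2) * kr ≤ (1 + ε/2) * (1 - ε) * y := by
                rw [← h18]; exact h17
            _ ≤ (1 - ε/2) * y := h19
        -- G n bound
        have hGcast : (n:ℝ) / (kr * kr) - 1 ≤ ((G n : ℕ) : ℝ) := by
          have hkk : 0 < k n * k n := Nat.mul_pos hk1 hk1
          have h20 : n < (n / (k n * k n) + 1) * (k n * k n) := by
            have h21 : k n * k n * (n / (k n * k n)) + n % (k n * k n) = n :=
              Nat.div_add_mod n (k n * k n)
            have h22 : n % (k n * k n) < k n * k n := Nat.mod_lt n hkk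
            calc n = k n * k n * (n / (k n * k n)) + n % (k n * k n) := h21.symm
              _ < k n * k n * (n / (k n * k n)) + k n * k n := by omega
              _ = (n / (k n * k n) + 1) * (k n * k n) := by ring
          have h23 : (n:ℝ) < (((G n : ℕ) : ℝ) + 1) * (kr * kr) := by
            rw [hkr, hGdef]
            exact_mod_cast h20
          rw [div_sub_one (by positivity), div_le_iff₀ (by positivity)]
          nlinarith
        -- δ G ≥ 3 y
        have hexpy : Real.exp y = (n:ℝ) := Real.exp_log hnpos
        have hGnn : (0:ℝ) ≤ ((G n : ℕ) : ℝ) := Nat.cast_nonneg _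
        have hkey : 3 * y ≤ dd * ((G n : ℕ) : ℝ) := by
          have h24 : c * Real.exp (-((1 - ε/2) * y)) * ((n:ℝ) / (kr * kr) - 1)
              ≤ dd * ((G n : ℕ) : ℝ) := by
            have h25 : c * Real.exp (-((1 - ε/2) * y)) * ((n:ℝ) / (kr * kr) - 1)
                ≤ c * Real.exp (-((1 - ε/2) * y)) * ((G n : ℕ) : ℝ) :=
              mul_le_mul_of_nonneg_left hGcast (by positivity)
            refine le_trans h25 ?_
            exact mul_le_mul_of_nonneg_right hdd_ge hGnn
          refine le_trans ?_ h24
          have h26 : Real.exp (-((1 - ε/2) * y)) * (n:ℝ) = Real.exp ((ε/2) * y) := by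
            rw [← hexpy, ← Real.exp_add]
            congr 1
            ring
          have h27 : Real.exp (-((1 - ε/2) * y)) ≤ 1 := by
            rw [Real.exp_le_one_iff]
            nlinarith
          have h28 : c * Real.exp (-((1 - ε/2) * y)) * ((n:ℝ) / (kr * kr) - 1)
              = c * (Real.exp ((ε/2) * y) / (kr * kr) - Real.exp (-((1 - ε/2) * y))) := by
            rw [← h26]
            field_simp
          rw [h28]
          have h29 : hs ^ 2 * Real.exp ((ε/2) * y) / y ^ 2
              ≤ Real.exp ((ε/2) * y) / (kr * kr) := by
            rw [div_le_div_iff₀ (by positivity) (by positivity)]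
            have h30 : hs * kr ≤ y := by
              have := mul_le_mul_of_nonneg_left hkry hs_pos.le
              calc hs * kr ≤ hs * (y / hs) := this
                _ = y := by field_simp
            nlinarith [Real.exp_pos ((ε/2) * y), mul_self_le_mul_self
              (by positivity : (0:ℝ) ≤ hs * kr) h30]
          have h31 : c * (hs ^ 2 * Real.exp ((ε/2) * y) / y ^ 2 - 1)
              ≤ c * (Real.exp ((ε/2) * y) / (kr * kr) - Real.exp (-((1 - ε/2) * y))) := by
            refine mul_le_mul_of_nonneg_left ?_ hcpos.le
            linarith
          linarith [hyE]
        -- final comparison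
        have hstep1 : (1 - dd) ^ (G n) ≤ Real.exp (-dd) ^ (G n) := by
          refine pow_le_pow_left₀ (by linarith) ?_ _
          linarith [Real.add_one_le_exp (-dd)]
        have hstep2 : Real.exp (-dd) ^ (G n) = Real.exp (-(dd * ((G n : ℕ) : ℝ))) := by
          rw [← Real.exp_nat_mul]
          congr 1
          ring
        have hstep3 : Real.exp (-(dd * ((G n : ℕ) : ℝ))) ≤ Real.exp (-(3 * y)) :=
          Real.exp_le_exp.2 (by linarith)
        have hstep4 : Real.exp (-(3 * y)) = ((n:ℝ) ^ 3)⁻¹ := by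
          rw [show (3:ℝ) * y = ((3:ℕ):ℝ) * y from by norm_num, Real.exp_neg,
            Real.exp_nat_mul, hexpy]
        have hkrn : kr ≤ (n:ℝ) / hs := by
          have h32 : y ≤ (n:ℝ) := by
            have := Real.log_le_sub_one_of_pos hnpos
            rw [← hy] at this
            linarith
          have h33 : y / hs ≤ (n:ℝ) / hs := div_le_div_of_nonneg_right h32 hs_pos.le
          linarith
        calc b n = kr * (1 - dd) ^ (G n) := by simp only [hb, hkr, hdd]
          _ ≤ kr * Real.exp (-(3 * y)) := by
              refine mul_le_mul_of_nonneg_left ?_ hkrpos.le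
              calc (1 - dd) ^ (G n) ≤ Real.exp (-dd) ^ (G n) := hstep1
                _ = Real.exp (-(dd * ((G n : ℕ) : ℝ))) := hstep2
                _ ≤ Real.exp (-(3 * y)) := hstep3
          _ ≤ ((n:ℝ) / hs) * ((n:ℝ) ^ 3)⁻¹ := by
              rw [hstep4]
              exact mul_le_mul_of_nonneg_right hkrn (by positivity)
          _ = (1/hs) * (1 / (n:ℝ) ^ 2) := by
              field_simp
      obtain ⟨I, hI⟩ := eventually_atTop.1 hev
      have hsum2 : Summable (fun n : ℕ => (1/hs) * (1 / (n:ℝ) ^ 2)) :=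
        (Real.summable_one_div_nat_pow.2 (by norm_num)).mul_left _
      have hsum3 : Summable (fun n : ℕ => (1/hs) * (1 / ((n + I : ℕ):ℝ) ^ 2)) :=
        (summable_nat_add_iff I).2 hsum2
      rw [← summable_nat_add_iff I]
      exact Summable.of_nonneg_of_le (fun n => hb0 _) (fun n => hI (n + I) (by omega)) hsum3
    have hbc := CGR.borelCantelli hb0 hsumb hμS
    filter_upwards [hbc] with ω hω hg
    obtain ⟨I₀, hI₀⟩ := eventually_atTop.1 hω
    rw [Filter.eventually_atTop]
    refine ⟨I₀, fun n hn => ?_⟩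
    have hkX : k n ≤ Xfun U s n ω := by
      rcases Nat.eq_zero_or_pos (k n) with hk0 | hk1
      · omega
      · have hnotin := hI₀ n hn
        refine CGR.lower_incl (G := G n) hg hk1 ?_ (fun g hgk => ?_)
        · rw [hGdef, mul_comm]
          exact Nat.div_mul_le_self n _
        · by_contra hno
          push_neg at hno
          refine hnotin ?_
          rw [hSdef]
          exact Set.mem_biUnion (Finset.mem_range.2 hgk) (fun l hl => hno l hl)
    have h1 : (1 - ε) * Real.log n / hs - 1 ≤ ((k n : ℕ) : ℝ) := by
      have h2 := Nat.lt_floor_add_one ((1 - ε) * Real.log n / hs)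
      have h3 : ((k n : ℕ) : ℝ) = ((⌊(1 - ε) * Real.log n / hs⌋₊ : ℕ) : ℝ) := by
        rw [hkdef]
      rw [h3]
      linarith
    have h2 : ((k n : ℕ) : ℝ) ≤ ((Xfun U s n ω : ℕ) : ℝ) := Nat.cast_le.2 hkX
    linarith
  -- ASSEMBLY
  set e : ℕ → ℝ := fun m => 1 / (m + 2 : ℝ) with he
  have he_pos : ∀ m : ℕ, 0 < e m := fun m => by positivity
  have he_half : ∀ m : ℕ, e m ≤ 1/2 := fun m => by
    rw [he]
    refine one_div_le_one_div_of_le (by norm_num) ?_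
    have : (0:ℝ) ≤ m := Nat.cast_nonneg m
    linarith
  have hAE := (ae_all_iff.2 fun m : ℕ => hupper (e m) (he_pos m) (he_half m)).and
    ((ae_all_iff.2 fun m : ℕ => hlower (e m) (he_pos m) (he_half m)).and hGood)
  filter_upwards [hAE] with ω hω
  obtain ⟨hup, hlow, hg⟩ := hω
  rw [Metric.tendsto_atTop]
  intro d hd
  obtain ⟨m, hm⟩ := exists_nat_gt (2 / (d * hs))
  have hm2 : e m / hs < d / 2 := by
    have hmpos : (0:ℝ) < (m:ℝ) + 2 := by positivity
    have hd0 : d ≠ 0 := ne_of_gt hd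
    have hs0 : hs ≠ 0 := ne_of_gt hs_pos
    have hstep : 2 / d < ((m:ℝ) + 2) * hs := by
      have h4 : 2 / (d * hs) < (m:ℝ) + 2 := by linarith
      have h5 := mul_lt_mul_of_pos_right h4 hs_pos
      rwa [show 2 / (d * hs) * hs = 2 / d from by field_simp] at h5
    rw [he, div_div, div_lt_iff₀ (by positivity)]
    have h6 := mul_lt_mul_of_pos_left hstep (show (0:ℝ) < d/2 by positivity)
    rw [show d/2*(2/d) = 1 from by field_simp] at h6
    linarith
  have hev3 : ∀ᶠ n : ℕ in atTop, 2 / d ≤ Real.log n ∧ 1 ≤ Real.log n := by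
    filter_upwards [hlogn.eventually_ge_atTop (2/d), hlogn.eventually_ge_atTop 1] with n h1 h2
    exact ⟨h1, h2⟩
  have hfinal : ∀ᶠ n : ℕ in atTop,
      dist ((Xfun U s n ω : ℝ) / Real.log n) (1 / hs) < d := by
    filter_upwards [hup m hg, hlow m hg, hev3] with n h1 h2 h3
    obtain ⟨hLd, hL1⟩ := h3
    set L := Real.log n with hL
    have hLpos : (0:ℝ) < L := lt_of_lt_of_le one_pos hL1
    have hinvL : 1 / L ≤ d / 2 := by
      have h4 : (0:ℝ) < 2 / d := by positivity
      have h5 := one_div_le_one_div_of_le h4 hLd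
      rwa [one_div_div] at h5
    have hXub : (Xfun U s n ω : ℝ) / L ≤ 1 / hs + e m / hs := by
      rw [div_le_iff₀ hLpos]
      calc (Xfun U s n ω : ℝ) ≤ (1 + e m) * L / hs := h1
        _ = (1 / hs + e m / hs) * L := by field_simp
    have hXlb : 1 / hs - e m / hs - 1 / L ≤ (Xfun U s n ω : ℝ) / L := by
      rw [le_div_iff₀ hLpos]
      calc (1 / hs - e m / hs - 1 / L) * L = (1 - e m) * L / hs - 1 := by
            field_simp
        _ ≤ (Xfun U s n ω : ℝ) := h2
    rw [Real.dist_eq, abs_sub_lt_iff]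
    have hem : 0 < e m / hs := div_pos (he_pos m) hs_pos
    constructor
    · linarith
    · linarith
  exact eventually_atTop.1 hfinal
end
end

section
/- Fix s ∈ 𝒜^ℕ and r ≥ 1, and define for real t the function D(t) := p(s^(r))·t^r + ((1−t)·p(s^(r))·t^{r−1}/p(s_r))·Σ_{z≥1} (Q^z(s_1, s_r) − p(s_r))·t^z + (1−t)·(1 + Σ_{j=2}^{r} t^{j−1}·(p(s^(j))/p(s_j))·1{(s_r, s_{r−1}, …, s_j) = (s_{r−j+1}, s_{r−j}, …, s_1)}), the series being convergent for |t| < 1/γ. Then D(t) ≠ 0 for all t ∈ [0,1], and there exists a constant κ > 0, independent of r and of s, such that every real zero t of D with 1 < t < 1/γ satisfies t ≥ 1 + κ·p(s^(r)). -/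
open MeasureTheory Filter Finset Classical

noncomputable section

/-- `Dden μ U Q p s r t` is the denominator `D(t)` of the Daudin–Robin formula
`Φ(s^(r), t) = (γ_r(t) + (1-t) δ_r(t⁻¹))⁻¹`, namely
`D(t) = p(s^(r)) t^r + ((1-t) p(s^(r)) t^{r-1} / p(s_r)) ∑_{z ≥ 1} (Q^z(s_1,s_r) − p(s_r)) t^z
+ (1-t) (1 + ∑_{j=2}^r t^{j-1} (p(s^(j))/p(s_j)) 1{(s_r, …, s_j) = (s_{r-j+1}, …, s_1)})`. -/
def Dden {Ω : Type*} [MeasurableSpace Ω] (μ : Measure Ω) (U : ℕ → Ω → Fin 4)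
    (Q : Matrix (Fin 4) (Fin 4) ℝ) (p : Fin 4 → ℝ)
    (s : ℕ → Fin 4) (r : ℕ) (t : ℝ) : ℝ :=
  pinf μ U s r * t ^ r
    + (1 - t) * pinf μ U s r * t ^ (r - 1) / p (s r) *
        ∑' z : ℕ, ((Q ^ (z + 1)) (s 1) (s r) - p (s r)) * t ^ (z + 1)
    + (1 - t) * (1 + ∑ j ∈ Finset.Icc 2 r,
        t ^ (j - 1) * (pinf μ U s j / p (s j)) *
          (if ∀ i ∈ Finset.range (r - j + 1), s (r - i) = s (r - j + 1 - i)
            then (1 : ℝ) else 0))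

private lemma powEntryNonneg (Q : Matrix (Fin 4) (Fin 4) ℝ) (hQ : ∀ u v, 0 < Q u v) :
    ∀ (n : ℕ) (u v : Fin 4), 0 ≤ (Q ^ n) u v := by
  intro n
  induction n with
  | zero => intro u v; rw [pow_zero, Matrix.one_apply]; split <;> norm_num
  | succ n ih =>
      intro u v
      rw [pow_succ, Matrix.mul_apply]
      exact Finset.sum_nonneg fun k _ => mul_nonneg (ih u k) (hQ k v).le

private lemma geomIccLe {x : ℝ} (hx0 : 0 ≤ x) (hx1 : x < 1) (n : ℕ) :
    (∑ j ∈ Finset.Icc 2 n, x ^ (j - 1)) ≤ 1 / (1 - x) := by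
  have h1x : (0:ℝ) < 1 - x := by linarith
  have h0 : ∑ j ∈ Finset.Icc 2 n, x ^ (j - 1) = ∑ i ∈ Finset.Icc 1 (n - 1), x ^ i := by
    rcases Nat.eq_zero_or_pos n with rfl | hn
    · simp
    · have h2 : Finset.Icc 2 n = (Finset.Icc 1 (n-1)).image (· + 1) := by
        rw [Finset.image_add_right_Icc]
        congr 1
        omega
      rw [h2, Finset.sum_image (by intro a _ b _ h; simp only at h; omega)]
      simp
  rw [h0]
  have h1 : ∑ i ∈ Finset.Icc 1 (n - 1), x ^ i ≤ ∑ i ∈ Finset.range n, x ^ i := by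
    apply Finset.sum_le_sum_of_subset_of_nonneg
    · intro i hi
      simp only [Finset.mem_Icc] at hi
      simp only [Finset.mem_range]
      omega
    · intro i _ _
      exact pow_nonneg hx0 i
  refine h1.trans ?_
  rw [geom_sum_eq hx1.ne n]
  have key : (x ^ n - 1) / (x - 1) = (1 - x ^ n) / (1 - x) := by
    rw [← neg_div_neg_eq]; congr 1 <;> ring
  rw [key, div_le_div_iff₀ h1x h1x]
  have := pow_nonneg hx0 n
  nlinarith

private lemma pinfEq {Ω : Type*} [MeasurableSpace Ω] (μ : Measure Ω) (U : ℕ → Ω → Fin 4)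
    (Q : Matrix (Fin 4) (Fin 4) ℝ) (p : Fin 4 → ℝ)
    (hMarkov : ∀ (n : ℕ) (w : Fin (n + 1) → Fin 4),
      (μ {ω | ∀ i : Fin (n + 1), U (i.1 + 1) ω = w i}).toReal
        = p (w 0) * ∏ i : Fin n, Q (w i.castSucc) (w i.succ))
    (s : ℕ → Fin 4) (m : ℕ) :
    pinf μ U s (m+1) = p (s (m+1)) * ∏ i : Fin m, Q (s (m + 1 - i.1)) (s (m - i.1)) := by
  have h := hMarkov m (fun i => s (m + 1 - i.1))
  simp only [Fin.coe_castSucc, Fin.val_succ, Nat.succ_sub_succ, Fin.val_zero,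
    Nat.sub_zero] at h
  exact h

set_option maxHeartbeats 2000000 in
/-- `D(t) ≠ 0` on `[0,1]`, and there is a constant `κ > 0` independent
of `r` and `s` such that every real zero `t` of `D` with `1 < t < 1/γ` satisfies
`t ≥ 1 + κ p(s^(r))`. -/
theorem Dden_zeroes
    {Ω : Type*} [MeasurableSpace Ω] (μ : Measure Ω) [IsProbabilityMeasure μ]
    (U : ℕ → Ω → Fin 4) (hU : ∀ n, Measurable (U n))
    (Q : Matrix (Fin 4) (Fin 4) ℝ) (p : Fin 4 → ℝ)
    (hQpos : ∀ u v, 0 < Q u v) (hQrow : ∀ u, ∑ v, Q u v = 1)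
    (hppos : ∀ u, 0 < p u) (hpsum : ∑ u, p u = 1)
    (hpinv : ∀ v, ∑ u, p u * Q u v = p v)
    (hMarkov : ∀ (n : ℕ) (w : Fin (n + 1) → Fin 4),
      (μ {ω | ∀ i : Fin (n + 1), U (i.1 + 1) ω = w i}).toReal
        = p (w 0) * ∏ i : Fin n, Q (w i.castSucc) (w i.succ))
    (γ K : ℝ) (hγ0 : 0 ≤ γ) (hγ1 : γ < 1) (hK : 0 ≤ K)
    (hbound : ∀ (u v : Fin 4) (m : ℕ), 1 ≤ m → |(Q ^ m) u v - p v| ≤ K * γ ^ m) :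
    ∃ κ : ℝ, 0 < κ ∧ ∀ (s : ℕ → Fin 4) (r : ℕ), 1 ≤ r →
      (∀ t ∈ Set.Icc (0 : ℝ) 1, Dden μ U Q p s r t ≠ 0) ∧
      (∀ t : ℝ, 1 < t → γ * t < 1 → Dden μ U Q p s r t = 0 →
        1 + κ * pinf μ U s r ≤ t) := by
  classical
  set cQ : ℝ := Finset.univ.inf' Finset.univ_nonempty (fun x : Fin 4 × Fin 4 => Q x.1 x.2)
    with hcQdef
  have hcQ_le : ∀ u v, cQ ≤ Q u v := fun u v => Finset.inf'_le _ (Finset.mem_univ (u, v))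
  have hcQ_pos : 0 < cQ := by
    obtain ⟨x, -, hx⟩ :=
      Finset.exists_mem_eq_inf' (Finset.univ_nonempty) (fun x : Fin 4 × Fin 4 => Q x.1 x.2)
    rw [hcQdef, hx]; exact hQpos _ _
  set pm : ℝ := Finset.univ.inf' Finset.univ_nonempty p with hpmdef
  have hpm_le : ∀ u, pm ≤ p u := fun u => Finset.inf'_le _ (Finset.mem_univ u)
  have hpm_pos : 0 < pm := by
    obtain ⟨x, -, hx⟩ := Finset.exists_mem_eq_inf' Finset.univ_nonempty p
    rw [hpmdef, hx]; exact hppos _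
  have hple1 : ∀ u, p u ≤ 1 := by
    intro u
    calc p u ≤ ∑ v, p v := Finset.single_le_sum (fun v _ => (hppos v).le) (Finset.mem_univ u)
      _ = 1 := hpsum
  have hpm1 : pm ≤ 1 := (hpm_le 0).trans (hple1 0)
  have hQle : ∀ u v, Q u v ≤ 1 - 3 * cQ := by
    intro u v
    have h1 : Q u v + ∑ w ∈ Finset.univ.erase v, Q u w = 1 := by
      rw [Finset.add_sum_erase _ _ (Finset.mem_univ v)]; exact hQrow u
    have h2 : (Finset.univ.erase v).card • cQ ≤ ∑ w ∈ Finset.univ.erase v, Q u w :=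
      Finset.card_nsmul_le_sum _ _ _ (fun w _ => hcQ_le u w)
    have h3 : (Finset.univ.erase v).card = 3 := by
      rw [Finset.card_erase_of_mem (Finset.mem_univ v)]; simp
    rw [h3] at h2
    have h4 : (3:ℕ) • cQ = 3 * cQ := by simp
    linarith [h4 ▸ h2]
  set q : ℝ := 1 - 3 * cQ with hqdef
  have hq0 : 0 < q := lt_of_lt_of_le (hQpos 0 0) (hQle 0 0)
  have hq1 : q < 1 := by rw [hqdef]; linarith
  set q' : ℝ := (1 + q) / 2 with hq'def
  have hq'0 : 0 < q' := by rw [hq'def]; linarith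
  have hq'1 : q' < 1 := by rw [hq'def]; linarith
  have h1γ : (0:ℝ) < 1 - γ := by linarith
  have h1q : (0:ℝ) < 1 - q := by linarith
  set C : ℝ := (2 * K / (1 - γ) + 1 + 2 / (1 - q)) / pm with hCdef
  have hC_pos : 0 < C := by
    apply div_pos _ hpm_pos
    have h1 : 0 ≤ 2 * K / (1 - γ) := div_nonneg (by linarith) h1γ.le
    have h2 : 0 < 2 / (1 - q) := div_pos two_pos h1q
    linarith
  set κ : ℝ := min ((1 - γ)/2) (min ((1 - q)/2) (1/(2*C))) with hκdef
  have hκ_pos : 0 < κ :=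
    lt_min (by linarith) (lt_min (by linarith) (by positivity))
  have hpinf_nonneg : ∀ (s : ℕ → Fin 4) (n : ℕ), 0 ≤ pinf μ U s n :=
    fun s n => ENNReal.toReal_nonneg
  have hpinf_pos : ∀ (s : ℕ → Fin 4) (k : ℕ), 0 < pinf μ U s (k+1) := by
    intro s k
    rw [pinfEq μ U Q p hMarkov s k]
    exact mul_pos (hppos _) (Finset.prod_pos fun i _ => hQpos _ _)
  have hpinf_le : ∀ (s : ℕ → Fin 4) (k : ℕ), pinf μ U s (k+1) ≤ q ^ k := by
    intro s k
    rw [pinfEq μ U Q p hMarkov s k]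
    calc p (s (k+1)) * ∏ i : Fin k, Q (s (k + 1 - i.1)) (s (k - i.1))
        ≤ 1 * ∏ _i : Fin k, q := by
          apply mul_le_mul (hple1 _) ?_ ?_ zero_le_one
          · exact Finset.prod_le_prod (fun i _ => (hQpos _ _).le) (fun i _ => hQle _ _)
          · exact Finset.prod_nonneg fun i _ => (hQpos _ _).le
      _ = q ^ k := by rw [one_mul, Finset.prod_const, Finset.card_univ, Fintype.card_fin]
  clear_value κ C q' q pm cQ
  refine ⟨κ, hκ_pos, fun s r hr => ?_⟩
  obtain ⟨m, rfl⟩ : ∃ m, r = m + 1 := ⟨r - 1, by omega⟩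
  have hc0 : 0 < p (s (m+1)) := hppos _
  constructor
  · -- Part 1 : no zeroes on [0,1]
    rintro t ⟨ht0, ht1⟩ hD
    rcases ht1.lt_or_eq with htlt | rfl
    · -- case t < 1
      have hγtlt : γ * t < 1 := lt_of_le_of_lt (mul_le_of_le_one_right hγ0 htlt.le) hγ1
      have hgsum : Summable (fun z : ℕ => K * (γ*t) ^ (z+1)) := by
        have h := (summable_geometric_of_lt_one (mul_nonneg hγ0 ht0) hγtlt).mul_left (K * (γ*t))
        exact h.congr fun z => by rw [pow_succ]; ring
      have habs : ∀ z : ℕ,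
          |((Q ^ (z+1)) (s 1) (s (m+1)) - p (s (m+1))) * t ^ (z+1)| ≤ K * (γ*t) ^ (z+1) := by
        intro z
        rw [abs_mul, abs_pow, abs_of_nonneg ht0, mul_pow]
        have h1 := hbound (s 1) (s (m+1)) (z+1) (by omega)
        have h2 : (0:ℝ) ≤ t ^ (z+1) := pow_nonneg ht0 _
        calc |(Q ^ (z+1)) (s 1) (s (m+1)) - p (s (m+1))| * t ^ (z+1)
            ≤ (K * γ ^ (z+1)) * t ^ (z+1) := mul_le_mul_of_nonneg_right h1 h2
          _ = K * (γ ^ (z+1) * t ^ (z+1)) := by ring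
      have hsum1 : Summable
          (fun z : ℕ => ((Q ^ (z+1)) (s 1) (s (m+1)) - p (s (m+1))) * t ^ (z+1)) :=
        Summable.of_abs (hgsum.of_nonneg_of_le (fun z => abs_nonneg _) habs)
      have hsum2 : Summable (fun z : ℕ => p (s (m+1)) * t ^ (z+1)) := by
        have h := (summable_geometric_of_lt_one ht0 htlt).mul_left (p (s (m+1)) * t)
        exact h.congr fun z => by rw [pow_succ]; ring
      have hsum3 : Summable (fun z : ℕ => (Q ^ (z+1)) (s 1) (s (m+1)) * t ^ (z+1)) := by
        have h := hsum1.add hsum2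
        exact h.congr fun z => by ring
      have htsum2 : ∑' z : ℕ, p (s (m+1)) * t ^ (z+1) = p (s (m+1)) * t * (1 - t)⁻¹ := by
        have h1 : ∀ z : ℕ, p (s (m+1)) * t ^ (z+1) = (p (s (m+1)) * t) * t ^ z :=
          fun z => by rw [pow_succ]; ring
        rw [tsum_congr h1, tsum_mul_left, tsum_geometric_of_lt_one ht0 htlt]
      have htsum : ∑' z : ℕ, ((Q ^ (z+1)) (s 1) (s (m+1)) - p (s (m+1))) * t ^ (z+1)
          = (∑' z : ℕ, (Q ^ (z+1)) (s 1) (s (m+1)) * t ^ (z+1))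
            - p (s (m+1)) * t * (1 - t)⁻¹ := by
        rw [← htsum2, ← Summable.tsum_sub hsum3 hsum2]
        exact tsum_congr fun z => by ring
      have hA0 : 0 ≤ ∑' z : ℕ, (Q ^ (z+1)) (s 1) (s (m+1)) * t ^ (z+1) :=
        tsum_nonneg fun z => mul_nonneg (powEntryNonneg Q hQpos _ _ _) (pow_nonneg ht0 _)
      refine absurd hD (ne_of_gt ?_)
      simp only [Dden, Nat.add_sub_cancel]
      rw [htsum]
      have hmid : (1 - t) * pinf μ U s (m+1) * t ^ m / p (s (m+1)) *
            ((∑' z : ℕ, (Q ^ (z+1)) (s 1) (s (m+1)) * t ^ (z+1))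
              - p (s (m+1)) * t * (1 - t)⁻¹)
          = (1 - t) * pinf μ U s (m+1) * t ^ m / p (s (m+1)) *
              (∑' z : ℕ, (Q ^ (z+1)) (s 1) (s (m+1)) * t ^ (z+1))
            - pinf μ U s (m+1) * t ^ (m+1) := by
        have ht1ne : (1:ℝ) - t ≠ 0 := by linarith
        field_simp
        ring
      rw [hmid]
      have hterm1 : 0 ≤ (1 - t) * pinf μ U s (m+1) * t ^ m / p (s (m+1)) *
          (∑' z : ℕ, (Q ^ (z+1)) (s 1) (s (m+1)) * t ^ (z+1)) := by
        apply mul_nonneg _ hA0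
        apply div_nonneg _ hc0.le
        exact mul_nonneg (mul_nonneg (by linarith) (hpinf_nonneg s _)) (pow_nonneg ht0 m)
      have hSJ0 : 0 ≤ ∑ j ∈ Finset.Icc 2 (m+1),
          t ^ (j - 1) * (pinf μ U s j / p (s j)) *
            (if ∀ i ∈ Finset.range (m + 1 - j + 1), s (m + 1 - i) = s (m + 1 - j + 1 - i)
              then (1:ℝ) else 0) := by
        apply Finset.sum_nonneg
        intro j _
        apply mul_nonneg (mul_nonneg (pow_nonneg ht0 _)
          (div_nonneg (hpinf_nonneg s j) (hppos _).le))
        split <;> norm_num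
      have h1t : (0:ℝ) < 1 - t := by linarith
      linarith [hterm1, mul_pos h1t (show (0:ℝ) < 1 + ∑ j ∈ Finset.Icc 2 (m+1),
          t ^ (j - 1) * (pinf μ U s j / p (s j)) *
            (if ∀ i ∈ Finset.range (m + 1 - j + 1), s (m + 1 - i) = s (m + 1 - j + 1 - i)
              then (1:ℝ) else 0) by linarith)]
    · -- case t = 1
      norm_num [Dden] at hD
      exact (hpinf_pos s m).ne' hD
  · -- Part 2 : zeroes in (1, 1/γ) are ≥ 1 + κ p(s^(r))
    intro t ht1 hγtlt hD0
    by_contra hcon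
    push_neg at hcon
    have hP_pos := hpinf_pos s m
    have hP_le : pinf μ U s (m+1) ≤ q ^ m := hpinf_le s m
    have hP1 : pinf μ U s (m+1) ≤ 1 := hP_le.trans (pow_le_one₀ hq0.le hq1.le)
    have ht0 : (0:ℝ) ≤ t := by linarith
    have hκ1 : κ ≤ (1-γ)/2 := by rw [hκdef]; exact min_le_left _ _
    have hκ2 : κ ≤ (1-q)/2 := by
      rw [hκdef]; exact le_trans (min_le_right _ _) (min_le_left _ _)
    have hκ3 : κ ≤ 1/(2*C) := by
      rw [hκdef]; exact le_trans (min_le_right _ _) (min_le_right _ _)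
    have htub : t < 1 + κ := by
      nlinarith [mul_le_of_le_one_right hκ_pos.le hP1]
    have hγt' : γ * t ≤ (1+γ)/2 := by
      nlinarith [mul_le_mul_of_nonneg_left htub.le hγ0,
        mul_le_mul_of_nonneg_right hγ1.le hκ_pos.le]
    have hqt' : q * t ≤ q' := by
      rw [hq'def]
      nlinarith [mul_le_mul_of_nonneg_left htub.le hq0.le,
        mul_le_mul_of_nonneg_right hq1.le hκ_pos.le]
    have hγt0 : 0 ≤ γ * t := mul_nonneg hγ0 ht0
    have hgsum : Summable (fun z : ℕ => K * (γ*t) ^ (z+1)) := by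
      have h := (summable_geometric_of_lt_one hγt0 hγtlt).mul_left (K * (γ*t))
      exact h.congr fun z => by rw [pow_succ]; ring
    have habs : ∀ z : ℕ,
        |((Q ^ (z+1)) (s 1) (s (m+1)) - p (s (m+1))) * t ^ (z+1)| ≤ K * (γ*t) ^ (z+1) := by
      intro z
      rw [abs_mul, abs_pow, abs_of_nonneg ht0, mul_pow]
      have h1 := hbound (s 1) (s (m+1)) (z+1) (by omega)
      have h2 : (0:ℝ) ≤ t ^ (z+1) := pow_nonneg ht0 _
      calc |(Q ^ (z+1)) (s 1) (s (m+1)) - p (s (m+1))| * t ^ (z+1)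
          ≤ (K * γ ^ (z+1)) * t ^ (z+1) := mul_le_mul_of_nonneg_right h1 h2
        _ = K * (γ ^ (z+1) * t ^ (z+1)) := by ring
    have habs_sum : Summable
        (fun z : ℕ => |((Q ^ (z+1)) (s 1) (s (m+1)) - p (s (m+1))) * t ^ (z+1)|) :=
      hgsum.of_nonneg_of_le (fun z => abs_nonneg _) habs
    set S := ∑' z : ℕ, ((Q ^ (z+1)) (s 1) (s (m+1)) - p (s (m+1))) * t ^ (z+1) with hSdef
    have hS : |S| ≤ 2*K/(1-γ) := by
      have h1 : |S| ≤ ∑' z : ℕ,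
          |((Q ^ (z+1)) (s 1) (s (m+1)) - p (s (m+1))) * t ^ (z+1)| := by
        rw [hSdef]
        have hn := norm_tsum_le_tsum_norm (f := fun z : ℕ =>
          ((Q ^ (z+1)) (s 1) (s (m+1)) - p (s (m+1))) * t ^ (z+1))
          (by simpa only [Real.norm_eq_abs] using habs_sum)
        simpa only [Real.norm_eq_abs] using hn
      have h2 : (∑' z : ℕ,
          |((Q ^ (z+1)) (s 1) (s (m+1)) - p (s (m+1))) * t ^ (z+1)|)
            ≤ ∑' z : ℕ, K * (γ*t) ^ (z+1) := Summable.tsum_le_tsum habs habs_sum hgsum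
      have h3 : ∑' z : ℕ, K * (γ*t) ^ (z+1) = K * (γ*t) * (1 - γ*t)⁻¹ := by
        have h1' : ∀ z : ℕ, K * (γ*t) ^ (z+1) = (K * (γ*t)) * (γ*t) ^ z :=
          fun z => by rw [pow_succ]; ring
        rw [tsum_congr h1', tsum_mul_left, tsum_geometric_of_lt_one hγt0 hγtlt]
      have h4 : K * (γ*t) * (1 - γ*t)⁻¹ ≤ 2*K/(1-γ) := by
        have hden : (1-γ)/2 ≤ 1 - γ*t := by linarith
        have hi : (1 - γ*t)⁻¹ ≤ ((1-γ)/2)⁻¹ := inv_anti₀ (by linarith) hden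
        have hKγt : K * (γ*t) ≤ K := by nlinarith
        calc K * (γ*t) * (1 - γ*t)⁻¹ ≤ K * ((1-γ)/2)⁻¹ :=
              mul_le_mul hKγt hi (inv_nonneg.mpr (by linarith)) hK
          _ = 2*K/(1-γ) := by rw [inv_div]; ring
      linarith
    have hPt : pinf μ U s (m+1) * t ^ m ≤ 1 := by
      calc pinf μ U s (m+1) * t ^ m ≤ q ^ m * t ^ m :=
            mul_le_mul_of_nonneg_right hP_le (pow_nonneg ht0 m)
        _ = (q*t) ^ m := (mul_pow q t m).symm
        _ ≤ 1 := pow_le_one₀ (mul_nonneg hq0.le ht0) (by linarith)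
    have hfrac : pinf μ U s (m+1) * t ^ m / p (s (m+1)) ≤ 1/pm :=
      div_le_div₀ zero_le_one hPt hpm_pos (hpm_le _)
    set SJ := ∑ j ∈ Finset.Icc 2 (m+1),
        t ^ (j - 1) * (pinf μ U s j / p (s j)) *
          (if ∀ i ∈ Finset.range (m + 1 - j + 1), s (m + 1 - i) = s (m + 1 - j + 1 - i)
            then (1:ℝ) else 0) with hSJdef
    have hSJ0 : 0 ≤ SJ := by
      rw [hSJdef]
      apply Finset.sum_nonneg
      intro j _
      apply mul_nonneg (mul_nonneg (pow_nonneg ht0 _)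
        (div_nonneg (hpinf_nonneg s j) (hppos _).le))
      split <;> norm_num
    have hSJle : SJ ≤ (1/(1-q')) * (1/pm) := by
      rw [hSJdef]
      calc (∑ j ∈ Finset.Icc 2 (m+1),
          t ^ (j - 1) * (pinf μ U s j / p (s j)) *
            (if ∀ i ∈ Finset.range (m + 1 - j + 1), s (m + 1 - i) = s (m + 1 - j + 1 - i)
              then (1:ℝ) else 0))
          ≤ ∑ j ∈ Finset.Icc 2 (m+1), q' ^ (j-1) * (1/pm) := by
            apply Finset.sum_le_sum
            intro j hj
            have hj2 : 2 ≤ j := (Finset.mem_Icc.mp hj).1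
            obtain ⟨k, rfl⟩ : ∃ k, j = k + 1 := ⟨j - 1, by omega⟩
            simp only [Nat.add_sub_cancel]
            have hbase : t ^ k * (pinf μ U s (k+1) / p (s (k+1))) ≤ q' ^ k * (1/pm) := by
              have ha : t ^ k * pinf μ U s (k+1) ≤ q' ^ k := by
                calc t ^ k * pinf μ U s (k+1) ≤ t ^ k * q ^ k :=
                      mul_le_mul_of_nonneg_left (hpinf_le s k) (pow_nonneg ht0 k)
                  _ = (t*q) ^ k := (mul_pow t q k).symm
                  _ ≤ q' ^ k := pow_le_pow_left₀ (mul_nonneg ht0 hq0.le)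
                        (by linarith [hqt']) k
              calc t ^ k * (pinf μ U s (k+1) / p (s (k+1)))
                  = (t ^ k * pinf μ U s (k+1)) / p (s (k+1)) := by ring
                _ ≤ q' ^ k / pm := div_le_div₀ (pow_nonneg hq'0.le k) ha hpm_pos (hpm_le _)
                _ = q' ^ k * (1/pm) := by ring
            have hbase0 : 0 ≤ t ^ k * (pinf μ U s (k+1) / p (s (k+1))) :=
              mul_nonneg (pow_nonneg ht0 _) (div_nonneg (hpinf_nonneg s _) (hppos _).le)
            calc t ^ k * (pinf μ U s (k+1) / p (s (k+1))) *
                (if ∀ i ∈ Finset.range (m + 1 - (k+1) + 1),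
                    s (m + 1 - i) = s (m + 1 - (k+1) + 1 - i) then (1:ℝ) else 0)
                ≤ t ^ k * (pinf μ U s (k+1) / p (s (k+1))) * 1 := by
                  apply mul_le_mul_of_nonneg_left _ hbase0
                  split <;> norm_num
              _ = t ^ k * (pinf μ U s (k+1) / p (s (k+1))) := mul_one _
              _ ≤ q' ^ k * (1/pm) := hbase
        _ = (∑ j ∈ Finset.Icc 2 (m+1), q' ^ (j-1)) * (1/pm) := by
            rw [Finset.sum_mul]
        _ ≤ (1/(1-q')) * (1/pm) := by
            apply mul_le_mul_of_nonneg_right (geomIccLe hq'0.le hq'1 (m+1)) (by positivity)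
    have hq'half : 1/(1-q') = 2/(1-q) := by
      have h : 1 - q' = (1-q)/2 := by rw [hq'def]; ring
      rw [h, one_div_div]
    have hE : |pinf μ U s (m+1) * t ^ m / p (s (m+1)) * S + (1 + SJ)| ≤ C := by
      have hfrac0 : 0 ≤ pinf μ U s (m+1) * t ^ m / p (s (m+1)) :=
        div_nonneg (mul_nonneg (hpinf_nonneg s _) (pow_nonneg ht0 m)) hc0.le
      have e1 : |pinf μ U s (m+1) * t ^ m / p (s (m+1)) * S| ≤ (1/pm) * (2*K/(1-γ)) := by
        rw [abs_mul, abs_of_nonneg hfrac0]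
        apply mul_le_mul hfrac hS (abs_nonneg S) (by positivity)
      have e2 : |1 + SJ| ≤ 1 + (2/(1-q)) * (1/pm) := by
        rw [abs_of_nonneg (by linarith : (0:ℝ) ≤ 1 + SJ)]
        have h := hSJle
        rw [hq'half] at h
        linarith
      have h1pm : 1 ≤ 1/pm := by rw [le_div_iff₀ hpm_pos]; linarith
      calc |pinf μ U s (m+1) * t ^ m / p (s (m+1)) * S + (1 + SJ)|
          ≤ |pinf μ U s (m+1) * t ^ m / p (s (m+1)) * S| + |1 + SJ| := abs_add_le _ _
        _ ≤ (1/pm) * (2*K/(1-γ)) + (1 + (2/(1-q)) * (1/pm)) := by linarith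
        _ ≤ C := by
            rw [hCdef, add_div, add_div]
            have e3 : (1/pm) * (2*K/(1-γ)) = 2*K/(1-γ)/pm := by ring
            have e4 : (2/(1-q)) * (1/pm) = 2/(1-q)/pm := by ring
            have e5 : (1:ℝ)/pm = 1/pm := rfl
            rw [e3, e4]
            have : (1:ℝ) ≤ 1/pm := h1pm
            have h6 : (1:ℝ)/pm ≤ 1/pm := le_refl _
            linarith [h1pm]
    have hDexp : Dden μ U Q p s (m+1) t =
        pinf μ U s (m+1) * t ^ (m+1)
          - (t - 1) * (pinf μ U s (m+1) * t ^ m / p (s (m+1)) * S + (1 + SJ)) := by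
      simp only [Dden, Nat.add_sub_cancel, ← hSdef, ← hSJdef]
      ring
    have hEle : (t - 1) * (pinf μ U s (m+1) * t ^ m / p (s (m+1)) * S + (1 + SJ))
        ≤ pinf μ U s (m+1) / 2 := by
      have hb1 : (t - 1) * (pinf μ U s (m+1) * t ^ m / p (s (m+1)) * S + (1 + SJ))
          ≤ (t - 1) * |pinf μ U s (m+1) * t ^ m / p (s (m+1)) * S + (1 + SJ)| :=
        mul_le_mul_of_nonneg_left (le_abs_self _) (by linarith)
      have hb2 : (t - 1) * |pinf μ U s (m+1) * t ^ m / p (s (m+1)) * S + (1 + SJ)|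
          ≤ (κ * pinf μ U s (m+1)) * C := by
        apply mul_le_mul (by linarith) hE (abs_nonneg _)
          (mul_nonneg hκ_pos.le hP_pos.le)
      have hb3 : (κ * pinf μ U s (m+1)) * C ≤ pinf μ U s (m+1) / 2 := by
        have hκC : κ * C ≤ 1/2 := by
          calc κ * C ≤ (1/(2*C)) * C := mul_le_mul_of_nonneg_right hκ3 hC_pos.le
            _ = 1/2 := by field_simp
        nlinarith [hP_pos]
      linarith
    have htp : pinf μ U s (m+1) ≤ pinf μ U s (m+1) * t ^ (m+1) := by
      have h := one_le_pow₀ ht1.le (n := m+1)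
      nlinarith [hP_pos]
    rw [hDexp] at hD0
    linarith [hP_pos]
end
end

section
/- For all real a > 0 and q ≥ 0, ∫_a^∞ ln((1 − 1/(y+1+q))^{−1}) · dy/y = L(−q/a) − L(−(1+q)/a). -/
open MeasureTheory Filter Finset

noncomputable section

/-- `L x` is the real dilogarithm `Li₂(x) = -∫_0^1 ln(1 - x u) / u du` (for `x ≤ 0`, this is
the analytic continuation of `∑_{k ≥ 1} x^k / k²`). -/
def L (x : ℝ) : ℝ := -∫ u in (0 : ℝ)..1, Real.log (1 - x * u) / u

lemma aux_integrableOn (a c : ℝ) (ha : 0 < a) (hc : 0 ≤ c) :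
    IntegrableOn (fun u : ℝ => Real.log (1 + c * u / a) / u) (Set.Ioo 0 1) := by
  apply Measure.integrableOn_of_bounded (M := c / a)
  · simp [Real.volume_Ioo]
  · exact ((Real.measurable_log.comp (by fun_prop)).div measurable_id).aestronglyMeasurable
  · filter_upwards [ae_restrict_mem measurableSet_Ioo] with u hu
    obtain ⟨hu0, hu1⟩ := hu
    have harg : (1 : ℝ) ≤ 1 + c * u / a := by
      have : 0 ≤ c * u / a := by positivity
      linarith
    have hlog0 : 0 ≤ Real.log (1 + c * u / a) := Real.log_nonneg harg
    have hlogle : Real.log (1 + c * u / a) ≤ c * u / a := by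
      have := Real.log_le_sub_one_of_pos (show (0:ℝ) < 1 + c * u / a by linarith)
      linarith
    rw [Real.norm_eq_abs, abs_of_nonneg (by positivity)]
    rw [div_le_div_iff₀ hu0 ha]
    have h1 := mul_le_mul_of_nonneg_right hlogle ha.le
    have h2 : c * u / a * a = c * u := div_mul_cancel₀ _ ha.ne'
    nlinarith

lemma aux_L (a c : ℝ) (ha : 0 < a) :
    L (-c / a) = -∫ u in Set.Ioo (0:ℝ) 1, Real.log (1 + c * u / a) / u := by
  have h : (fun u : ℝ => Real.log (1 - -c / a * u) / u)
      = fun u : ℝ => Real.log (1 + c * u / a) / u := by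
    funext u; congr 2; ring
  rw [L, h, intervalIntegral.integral_of_le (by norm_num : (0:ℝ) ≤ 1),
    integral_Ioc_eq_integral_Ioo]

/-- For all `a > 0` and `q ≥ 0`,
`∫_a^∞ ln((1 - 1/(y+1+q))⁻¹) dy/y = Li₂(-q/a) - Li₂(-(1+q)/a)`. -/
theorem dilog_integral_identity (a q : ℝ) (ha : 0 < a) (hq : 0 ≤ q) :
    ∫ y in Set.Ioi a, Real.log (1 - 1 / (y + 1 + q))⁻¹ / y
      = L (-q / a) - L (-(1 + q) / a) := by
  have hq1 : (0:ℝ) ≤ 1 + q := by linarith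
  -- RHS as a single integral over Ioo 0 1
  have hRHS : L (-q / a) - L (-(1 + q) / a)
      = ∫ u in Set.Ioo (0:ℝ) 1,
          (Real.log (1 + (1 + q) * u / a) / u - Real.log (1 + q * u / a) / u) := by
    rw [aux_L a q ha, aux_L a (1 + q) ha,
      integral_sub (aux_integrableOn a (1+q) ha hq1) (aux_integrableOn a q ha hq)]
    ring
  rw [hRHS]
  -- change of variables y = a / u
  have himage : (fun u : ℝ => a / u) '' Set.Ioo 0 1 = Set.Ioi a := by
    ext y
    simp only [Set.mem_image, Set.mem_Ioo, Set.mem_Ioi]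
    constructor
    · rintro ⟨u, ⟨hu0, hu1⟩, rfl⟩
      rw [lt_div_iff₀ hu0]
      nlinarith
    · intro hy
      have hy0 : 0 < y := ha.trans hy
      exact ⟨a / y, ⟨by positivity, (div_lt_one hy0).2 hy⟩, by field_simp⟩
  have hderiv : ∀ u ∈ Set.Ioo (0:ℝ) 1,
      HasDerivWithinAt (fun u : ℝ => a / u) (-(a / u ^ 2)) (Set.Ioo 0 1) u := by
    intro u hu
    have hu0 : (0:ℝ) < u := hu.1
    have h : HasDerivAt (fun u : ℝ => a / u) (-(a / u ^ 2)) u := by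
      simpa [div_eq_mul_inv, mul_neg] using (hasDerivAt_inv hu0.ne').const_mul a
    exact h.hasDerivWithinAt
  have hinj : Set.InjOn (fun u : ℝ => a / u) (Set.Ioo 0 1) := by
    intro u hu v hv h
    have hu0 : (0:ℝ) < u := hu.1
    have hv0 : (0:ℝ) < v := hv.1
    field_simp at h
    rcases h with h | h
    rfl
  rw [← himage,
    integral_image_eq_integral_abs_deriv_smul measurableSet_Ioo hderiv hinj
      (fun y => Real.log (1 - 1 / (y + 1 + q))⁻¹ / y)]
  apply setIntegral_congr_fun measurableSet_Ioo
  intro u hu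
  obtain ⟨hu0, hu1⟩ := hu
  have hA : (0:ℝ) < a + (1 + q) * u := by nlinarith
  have hB : (0:ℝ) < a + q * u := by nlinarith
  have h1 : a / u + 1 + q = (a + (1 + q) * u) / u := by field_simp; ring
  have h2 : (1:ℝ) - 1 / (a / u + 1 + q) = (a + q * u) / (a + (1 + q) * u) := by
    rw [h1, one_div, inv_div]
    field_simp
    ring
  have h3 : ((a + q * u) / (a + (1 + q) * u))⁻¹ = (a + (1 + q) * u) / (a + q * u) :=
    inv_div _ _
  have h4 : (1:ℝ) + (1 + q) * u / a = (a + (1 + q) * u) / a := by field_simp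
  have h5 : (1:ℝ) + q * u / a = (a + q * u) / a := by field_simp
  simp only [smul_eq_mul]
  rw [h2, h3, h4, h5, Real.log_div hA.ne' hB.ne', Real.log_div hA.ne' ha.ne',
    Real.log_div hB.ne' ha.ne', abs_neg, abs_of_pos (by positivity : (0:ℝ) < a / u ^ 2)]
  field_simp
  ring

end
end
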